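/- arXiv:1210.4230 — 8 statements merged into one kernel-verified Lean document; each statement's English description precedes it below -/
import Mathlib

section
/- In an (s,t)-switchable set S, s-equivalence implies connectedness: if a, b ∈ S are s-equivalent, then there exists a path a = c_0, c_1, …, c_k = b with all c_j ∈ S and d(c_{j-1}, c_j) = 1 for each j. -/
open Finset

/-- The set of indices: `a i` (a value in `Fin (r i)`) represents the entry `a_i = (a i) + 1`
of an index in `[r 1] × ⋯ × [r n]`.  So `0` corresponds to the entry `1` and `r i - 1`
to the entry `r i`. -/
abbrev Idx (n : ℕ) (r : Fin n → ℕ) := ∀ i : Fin n, Fin (r i)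

/-- `a` and `b` are `s`-equivalent: equal sums of the first `s` components and equal
remaining components. -/
def sEquiv (n s : ℕ) (r : Fin n → ℕ) (a b : Idx n r) : Prop :=
  (∑ i ∈ Finset.univ.filter (fun i : Fin n => (i : ℕ) < s), (a i : ℕ)) =
    (∑ i ∈ Finset.univ.filter (fun i : Fin n => (i : ℕ) < s), (b i : ℕ)) ∧
  ∀ i : Fin n, s ≤ (i : ℕ) → a i = b i

/-- The switch of `a` and `b` with respect to a single component `i`. -/
def sw {n : ℕ} {r : Fin n → ℕ} (i : Fin n) (a b : Idx n r) : Idx n r :=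
  fun j => if j = i then b j else a j

/-- The switch of `a` and `b` with respect to a set `L` of components. -/
def swL {n : ℕ} {r : Fin n → ℕ} (L : Finset (Fin n)) (a b : Idx n r) : Idx n r :=
  fun j => if j ∈ L then b j else a j

/-- An `(s,t)`-switchable subset of the set of indices. -/
def Switchable (n s t : ℕ) (r : Fin n → ℕ) (S : Set (Idx n r)) : Prop :=
  (∀ a b, a ∈ S → b ∈ S → hammingDist a b = 2 →
    ∀ i : Fin n, (i : ℕ) < t → sw i a b ∈ S) ∧
  (∀ a b, a ∈ S → sEquiv n s r a b → b ∈ S)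

/-- `c 0, c 1, …, c k` is a path in `S`: all members lie in `S` and consecutive members
have Hamming distance `1`. -/
def IsPathIn {n : ℕ} {r : Fin n → ℕ} (S : Set (Idx n r)) (c : ℕ → Idx n r) (k : ℕ) : Prop :=
  (∀ j ≤ k, c j ∈ S) ∧ ∀ j < k, hammingDist (c j) (c (j + 1)) = 1

/-- `a` and `b` are connected in `S`. -/
def ConnectedIn {n : ℕ} {r : Fin n → ℕ} (S : Set (Idx n r)) (a b : Idx n r) : Prop :=
  ∃ k c, c 0 = a ∧ c k = b ∧ IsPathIn S c k

section Helpers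

variable {n : ℕ} {r : Fin n → ℕ} {S : Set (Idx n r)}

lemma connectedIn_refl {a : Idx n r} (ha : a ∈ S) : ConnectedIn S a a :=
  ⟨0, fun _ => a, rfl, rfl, fun _ _ => ha, fun j hj => absurd hj (Nat.not_lt_zero j)⟩

lemma connectedIn_trans {a b c : Idx n r} (h1 : ConnectedIn S a b)
    (h2 : ConnectedIn S b c) : ConnectedIn S a c := by
  obtain ⟨k1, c1, hc10, hc1k, hmem1, hd1⟩ := h1
  obtain ⟨k2, c2, hc20, hc2k, hmem2, hd2⟩ := h2
  have key : ∀ m, m ≤ k1 → (if m < k1 then c1 m else c2 (m - k1)) = c1 m := by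
    intro m hm
    by_cases h : m < k1
    · rw [if_pos h]
    · rw [if_neg h]
      have : m = k1 := by omega
      subst this
      rw [Nat.sub_self, hc20, hc1k]
  refine ⟨k1 + k2, fun j => if j < k1 then c1 j else c2 (j - k1), ?_, ?_, ?_, ?_⟩
  · dsimp only; rw [key 0 (Nat.zero_le _), hc10]
  · dsimp only
    rw [if_neg (by omega : ¬ k1 + k2 < k1), Nat.add_sub_cancel_left, hc2k]
  · intro j hj; dsimp only
    by_cases h : j < k1
    · rw [if_pos h]; exact hmem1 j h.le
    · rw [if_neg h]; exact hmem2 (j - k1) (by omega)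
  · intro j hj; dsimp only
    by_cases h : j < k1
    · rw [key j h.le, key (j + 1) (by omega)]; exact hd1 j h
    · rw [if_neg h, if_neg (by omega : ¬ j + 1 < k1)]
      have : j + 1 - k1 = (j - k1) + 1 := by omega
      rw [this]; exact hd2 (j - k1) (by omega)

lemma connectedIn_two {a m a' : Idx n r} (ha : a ∈ S) (hm : m ∈ S) (ha' : a' ∈ S)
    (h1 : hammingDist a m = 1) (h2 : hammingDist m a' = 1) : ConnectedIn S a a' := by
  refine ⟨2, fun j => if j = 0 then a else if j = 1 then m else a', rfl, rfl, ?_, ?_⟩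
  · intro j hj; interval_cases j <;> simp [ha, hm, ha']
  · intro j hj; interval_cases j <;> simpa

/-- One "switch move": change `a` at the two coordinates `z` (index 0) and `i < s`,
keeping the sum; the result is in `S` and connected to `a` in `S`. -/
lemma switch_step {n s t : ℕ} {r : Fin n → ℕ} {S : Set (Idx n r)} (hs1 : 1 ≤ s) (ht1 : 1 ≤ t)
    (hS : Switchable n s t r S)
    (z : Fin n) (hz : (z : ℕ) = 0)
    (a a' : Idx n r) (ha : a ∈ S) (i : Fin n) (hiz : i ≠ z) (his : (i : ℕ) < s)
    (hz' : (a' z : ℕ) ≠ (a z : ℕ)) (hi' : (a' i : ℕ) ≠ (a i : ℕ))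
    (hoth : ∀ j, j ≠ z → j ≠ i → a' j = a j)
    (hsum : (a' z : ℕ) + (a' i : ℕ) = (a z : ℕ) + (a i : ℕ)) :
    a' ∈ S ∧ ConnectedIn S a a' ∧ sEquiv n s r a a' := by
  classical
  set T : Finset (Fin n) := Finset.univ.filter (fun j : Fin n => (j : ℕ) < s) with hT
  have hzT : z ∈ T := by simp [hT, hz]; omega
  have hiT : i ∈ T.erase z := Finset.mem_erase.2 ⟨hiz, by simp [hT, his]⟩
  have hrest : ∑ j ∈ (T.erase z).erase i, (a j : ℕ) = ∑ j ∈ (T.erase z).erase i, (a' j : ℕ) := by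
    refine Finset.sum_congr rfl fun j hj => ?_
    have hji : j ≠ i := (Finset.mem_erase.1 hj).1
    have hjz : j ≠ z := (Finset.mem_erase.1 (Finset.mem_of_mem_erase hj)).1
    rw [hoth j hjz hji]
  have hsum' : ∑ j ∈ T, (a j : ℕ) = ∑ j ∈ T, (a' j : ℕ) := by
    rw [← Finset.add_sum_erase T (fun j => (a j : ℕ)) hzT,
        ← Finset.add_sum_erase T (fun j => (a' j : ℕ)) hzT,
        ← Finset.add_sum_erase _ (fun j => (a j : ℕ)) hiT,
        ← Finset.add_sum_erase _ (fun j => (a' j : ℕ)) hiT, hrest]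
    omega
  have hEq : sEquiv n s r a a' := by
    refine ⟨hsum', fun j hj => ?_⟩
    have hjz : j ≠ z := fun h => by subst h; omega
    have hji : j ≠ i := fun h => by subst h; omega
    exact (hoth j hjz hji).symm
  have ha'S : a' ∈ S := hS.2 a a' ha hEq
  have hfilter : (Finset.univ.filter fun j => a j ≠ a' j) = {z, i} := by
    ext j
    simp only [Finset.mem_filter, Finset.mem_univ, true_and, Finset.mem_insert,
      Finset.mem_singleton]
    constructor
    · intro hj
      by_contra hc
      push_neg at hc
      exact hj (hoth j hc.1 hc.2).symm
    · rintro (rfl | rfl)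
      · exact fun h => hz' (by rw [h])
      · exact fun h => hi' (by rw [h])
  have hd2 : hammingDist a a' = 2 := by
    show (Finset.univ.filter fun j => a j ≠ a' j).card = 2
    rw [hfilter]
    exact Finset.card_pair (Ne.symm hiz)
  have hmS : sw z a a' ∈ S := hS.1 a a' ha ha'S hd2 z (by omega)
  have hd1 : hammingDist a (sw z a a') = 1 := by
    show (Finset.univ.filter fun j => a j ≠ sw z a a' j).card = 1
    have : (Finset.univ.filter fun j => a j ≠ sw z a a' j) = {z} := by
      ext j
      simp only [Finset.mem_filter, Finset.mem_univ, true_and, Finset.mem_singleton, sw]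
      constructor
      · intro hj
        by_contra hc
        simp [hc] at hj
      · rintro rfl
        refine Finset.mem_filter.2 ⟨Finset.mem_univ _, ?_⟩
        simp only [eq_self_iff_true, if_true]
        exact fun h => hz' (by rw [h])
    rw [this, Finset.card_singleton]
  have hd1' : hammingDist (sw z a a') a' = 1 := by
    show (Finset.univ.filter fun j => sw z a a' j ≠ a' j).card = 1
    have : (Finset.univ.filter fun j => sw z a a' j ≠ a' j) = {i} := by
      ext j
      simp only [Finset.mem_filter, Finset.mem_univ, true_and, Finset.mem_singleton, sw]
      constructor
      · intro hj
        by_contra hc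
        by_cases hjz : j = z
        · simp [hjz] at hj
        · have hj := (Finset.mem_filter.1 hj).2
          simp only [if_neg hjz] at hj
          exact hj (hoth j hjz hc).symm
      · rintro rfl
        refine Finset.mem_filter.2 ⟨Finset.mem_univ _, ?_⟩
        simp only [if_neg hiz]
        exact fun h => hi' (by rw [h])
    rw [this, Finset.card_singleton]
  exact ⟨ha'S, connectedIn_two ha hmS ha'S hd1 hd1', hEq⟩

end Helpers

/-- in an `(s,t)`-switchable set, `s`-equivalence implies connectedness. -/


theorem sEquiv_implies_connected (n s t : ℕ) (r : Fin n → ℕ)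
    (hs1 : 1 ≤ s) (hsn : s ≤ n) (ht1 : 1 ≤ t) (htn : t ≤ n) (hr : ∀ i, 2 ≤ r i)
    (S : Set (Idx n r)) (hS : Switchable n s t r S)
    (a b : Idx n r) (ha : a ∈ S) (hb : b ∈ S) (hab : sEquiv n s r a b) :
    ConnectedIn S a b := by
  classical
  have hn : 0 < n := lt_of_lt_of_le hs1 hsn
  set z : Fin n := ⟨0, hn⟩ with hzdef
  have hz : (z : ℕ) = 0 := rfl
  set F : Finset (Fin n) :=
    Finset.univ.filter (fun i : Fin n => 0 < (i : ℕ) ∧ (i : ℕ) < s) with hF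
  set T : Finset (Fin n) := Finset.univ.filter (fun i : Fin n => (i : ℕ) < s) with hT
  have hzF : z ∉ F := by simp [hF]; omega
  have hsplit : ∀ x : Idx n r, ∑ i ∈ T, (x i : ℕ) = (x z : ℕ) + ∑ i ∈ F, (x i : ℕ) := by
    intro x
    have hTF : T = insert z F := by
      ext i
      simp only [hT, hF, Finset.mem_filter, Finset.mem_univ, true_and, Finset.mem_insert]
      constructor
      · intro h
        rcases Nat.eq_zero_or_pos (i : ℕ) with h0 | h0
        · exact Or.inl (Fin.ext (h0.trans hz.symm))
        · exact Or.inr ⟨h0, h⟩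
      · rintro (rfl | ⟨_, h⟩)
        · omega
        · exact h
    rw [hTF, Finset.sum_insert hzF]
  suffices H : ∀ P : ℕ, ∀ a : Idx n r, a ∈ S → sEquiv n s r a b →
      (∑ i ∈ F, Nat.dist (a i) (b i)) = P → ConnectedIn S a b from H _ a ha hab rfl
  intro P
  induction P using Nat.strong_induction_on with
  | _ P IH =>
  intro a ha hab hP
  have hE : (a z : ℕ) + ∑ i ∈ F, (a i : ℕ) = (b z : ℕ) + ∑ i ∈ F, (b i : ℕ) := by
    rw [← hsplit a, ← hsplit b]
    exact hab.1
  by_cases hP0 : P = 0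
  · -- base case : a = b
    subst hP0
    have hFz : ∀ i ∈ F, (a i : ℕ) = (b i : ℕ) := by
      intro i hi
      have := (Finset.sum_eq_zero_iff.1 hP) i hi
      exact Nat.eq_of_dist_eq_zero this
    have hzz : (a z : ℕ) = (b z : ℕ) := by
      have : ∑ i ∈ F, (a i : ℕ) = ∑ i ∈ F, (b i : ℕ) :=
        Finset.sum_congr rfl hFz
      omega
    have heq : a = b := by
      funext i
      by_cases hle : s ≤ (i : ℕ)
      · exact hab.2 i hle
      · by_cases hi0 : (i : ℕ) = 0
        · have : i = z := Fin.ext (hi0.trans hz.symm)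
          subst this
          exact Fin.ext hzz
        · have hiF : i ∈ F := by simp [hF]; omega
          exact Fin.ext (hFz i hiF)
    rw [heq]
    exact connectedIn_refl hb
  · -- inductive step
    have hP0' : 0 < P := Nat.pos_of_ne_zero hP0
    have hi0 : ∃ i ∈ F, (a i : ℕ) ≠ (b i : ℕ) := by
      by_contra hc
      push_neg at hc
      have : ∑ i ∈ F, Nat.dist (a i) (b i) = 0 :=
        Finset.sum_eq_zero fun i hi => Nat.dist_eq_zero (hc i hi)
      omega
    have hmove : ∃ i ∈ F, ∃ (vz : Fin (r z)) (vi : Fin (r i)),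
        (vz : ℕ) + (vi : ℕ) = (a z : ℕ) + (a i : ℕ) ∧ (vz : ℕ) ≠ (a z : ℕ) ∧
        Nat.dist (vi : ℕ) (b i : ℕ) + 1 = Nat.dist (a i : ℕ) (b i : ℕ) := by
      by_cases hlt : ∃ i ∈ F, (a i : ℕ) < (b i : ℕ)
      · obtain ⟨i, hiF, hi⟩ := hlt
        by_cases haz : 0 < (a z : ℕ)
        · -- move mass from z to i
          refine ⟨i, hiF, ⟨(a z : ℕ) - 1, by have := (a z).isLt; omega⟩,
            ⟨(a i : ℕ) + 1, by have := (b i).isLt; omega⟩, by first | (simp; omega) | simp, by first | (simp; omega) | simp, ?_⟩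
          simp only [Nat.dist]
          omega
        · -- a z = 0 : find i' with b i' < a i'
          have haz0 : (a z : ℕ) = 0 := by omega
          have hgt : ∃ i' ∈ F, (b i' : ℕ) < (a i' : ℕ) := by
            by_contra hc
            push_neg at hc
            have hlt' : ∑ i ∈ F, (a i : ℕ) < ∑ i ∈ F, (b i : ℕ) :=
              Finset.sum_lt_sum (fun i hi => hc i hi) ⟨i, hiF, hi⟩
            omega
          obtain ⟨i', hiF', hi'⟩ := hgt
          refine ⟨i', hiF', ⟨(a z : ℕ) + 1, by have := hr z; omega⟩,
            ⟨(a i' : ℕ) - 1, by have := (a i').isLt; omega⟩, by first | (simp; omega) | simp, by first | (simp; omega) | simp, ?_⟩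
          simp only [Nat.dist]
          omega
      · -- all a i ≥ b i on F, some strictly
        push_neg at hlt
        obtain ⟨i, hiF, hi⟩ := hi0
        have hgt : (b i : ℕ) < (a i : ℕ) := lt_of_le_of_ne (hlt i hiF) (Ne.symm hi)
        have hlt' : ∑ j ∈ F, (b j : ℕ) < ∑ j ∈ F, (a j : ℕ) :=
          Finset.sum_lt_sum (fun j hj => hlt j hj) ⟨i, hiF, hgt⟩
        have hzb : (a z : ℕ) < (b z : ℕ) := by omega
        refine ⟨i, hiF, ⟨(a z : ℕ) + 1, by have := (b z).isLt; omega⟩,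
          ⟨(a i : ℕ) - 1, by have := (a i).isLt; omega⟩, by first | (simp; omega) | simp, by first | (simp; omega) | simp, ?_⟩
        simp only [Nat.dist]
        omega
    obtain ⟨i, hiF, vz, vi, hsum, hvz, hdist⟩ := hmove
    have hiF' : 0 < (i : ℕ) ∧ (i : ℕ) < s := by simpa [hF] using hiF
    have hiz : i ≠ z := by
      intro h
      rw [h, hz] at hiF'
      omega
    set a' : Idx n r := Function.update (Function.update a i vi) z vz with ha'def
    have ha'z : a' z = vz := by rw [ha'def, Function.update_self]
    have ha'i : a' i = vi := by
      rw [ha'def, Function.update_of_ne hiz, Function.update_self]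
    have ha'o : ∀ j, j ≠ z → j ≠ i → a' j = a j := fun j hjz hji => by
      rw [ha'def, Function.update_of_ne hjz, Function.update_of_ne hji]
    have hvi : (vi : ℕ) ≠ (a i : ℕ) := by
      intro h
      rw [h] at hdist
      omega
    obtain ⟨ha'S, hConn, hEq⟩ :=
      switch_step hs1 ht1 hS z hz a a' ha i hiz hiF'.2
        (by rw [ha'z]; exact hvz) (by rw [ha'i]; exact hvi) ha'o
        (by rw [ha'z, ha'i]; exact hsum)
    have hab' : sEquiv n s r a' b :=
      ⟨hEq.1.symm.trans hab.1, fun j hj => (hEq.2 j hj).symm.trans (hab.2 j hj)⟩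
    have hrest : ∑ j ∈ F.erase i, Nat.dist (a' j) (b j)
        = ∑ j ∈ F.erase i, Nat.dist (a j) (b j) := by
      refine Finset.sum_congr rfl fun j hj => ?_
      have hji : j ≠ i := (Finset.mem_erase.1 hj).1
      have hjz : j ≠ z := by
        intro h
        exact hzF (h ▸ Finset.mem_of_mem_erase hj)
      rw [ha'o j hjz hji]
    have hP' : (∑ j ∈ F, Nat.dist (a' j) (b j)) + 1 = P := by
      rw [← hP, ← Finset.add_sum_erase F (fun j => Nat.dist (a' j) (b j)) hiF,
        ← Finset.add_sum_erase F (fun j => Nat.dist (a j) (b j)) hiF, hrest, ha'i]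
      omega
    exact connectedIn_trans hConn
      (IH (∑ j ∈ F, Nat.dist (a' j) (b j)) (by omega) a' ha'S hab' rfl)
end

section
/- Every equivalence class T with respect to connectedness inside an (s,t)-switchable set S is itself an (s,t)-switchable set. -/
open Finset

section Helpers

open Relation

variable {n : ℕ} {r : Fin n → ℕ} {S : Set (Idx n r)}

/-- one-step adjacency relation in `S` -/
def AdjRel (S : Set (Idx n r)) (x y : Idx n r) : Prop :=
  x ∈ S ∧ y ∈ S ∧ hammingDist x y = 1

lemma ham_card (u v : Idx n r) :
    hammingDist u v = (Finset.univ.filter fun k => u k ≠ v k).card := rfl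

lemma conn_of_rtg {x y : Idx n r} (hx : x ∈ S) (h : ReflTransGen (AdjRel S) x y) :
    ConnectedIn S x y := by
  induction h with
  | refl =>
    exact ⟨0, fun _ => x, rfl, rfl, fun j _ => hx, fun j hj => absurd hj (Nat.not_lt_zero j)⟩
  | @tail b y hxb hby ih =>
    obtain ⟨k, c, hc0, hck, hmem, hstep⟩ := ih
    refine ⟨k + 1, fun j => if j ≤ k then c j else y, ?_, ?_, ?_, ?_⟩
    · simp [Nat.zero_le, hc0]
    · simp
    · intro j hj
      by_cases h' : j ≤ k
      · simpa [h'] using hmem j h'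
      · simpa [h'] using hby.2.1
    · intro j hj
      rcases Nat.lt_or_ge j k with h' | h'
      · have h1 : j ≤ k := h'.le
        have h2 : j + 1 ≤ k := h'
        simpa [h1, h2] using hstep j h'
      · have hjk : j = k := le_antisymm (Nat.lt_succ_iff.mp hj) h'
        subst hjk
        have : ¬ (j + 1 ≤ j) := by omega
        simpa [this, hck] using hby.2.2

lemma rtg_of_path (c : ℕ → Idx n r) : ∀ k, IsPathIn S c k →
    ReflTransGen (AdjRel S) (c 0) (c k) := by
  intro k
  induction k with
  | zero => intro _; exact ReflTransGen.refl
  | succ k ih =>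
    intro ⟨hmem, hstep⟩
    have hk : IsPathIn S c k :=
      ⟨fun j hj => hmem j (hj.trans (Nat.le_succ k)), fun j hj => hstep j (hj.trans (Nat.lt_succ_self k))⟩
    exact (ih hk).tail ⟨hmem k (Nat.le_succ k), hmem (k+1) le_rfl, hstep k (Nat.lt_succ_self k)⟩

lemma rtg_of_conn {x y : Idx n r} (h : ConnectedIn S x y) :
    x ∈ S ∧ y ∈ S ∧ ReflTransGen (AdjRel S) x y := by
  obtain ⟨k, c, hc0, hck, hp⟩ := h
  refine ⟨hc0 ▸ hp.1 0 (Nat.zero_le k), hck ▸ hp.1 k le_rfl, ?_⟩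
  have := rtg_of_path c k hp
  rwa [hc0, hck] at this

end Helpers

section Helpers2
open Relation
variable {n s t : ℕ} {r : Fin n → ℕ} {S : Set (Idx n r)}

lemma sEquiv_symm {a b : Idx n r} (h : sEquiv n s r a b) : sEquiv n s r b a :=
  ⟨h.1.symm, fun i hi => (h.2 i hi).symm⟩

lemma sEquiv_trans {a b c : Idx n r} (h1 : sEquiv n s r a b) (h2 : sEquiv n s r b c) :
    sEquiv n s r a c :=
  ⟨h1.1.trans h2.1, fun i hi => (h1.2 i hi).trans (h2.2 i hi)⟩

lemma two_step (hS : Switchable n s t r S) {x y : Idx n r} (hx : x ∈ S) (hy : y ∈ S)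
    (hd : hammingDist x y = 2) {i : Fin n} (hi : (i : ℕ) < t) (hne : x i ≠ y i) :
    ReflTransGen (AdjRel S) x y := by
  have hm : sw i x y ∈ S := hS.1 x y hx hy hd i hi
  have h1 : hammingDist x (sw i x y) = 1 := by
    rw [ham_card]
    have : (Finset.univ.filter fun k => x k ≠ sw i x y k) = {i} := by
      ext k
      by_cases hk : k = i
      · subst hk; simp [sw, hne]
      · simp [sw, hk]
    rw [this, Finset.card_singleton]
  have h2 : hammingDist (sw i x y) y = 1 := by
    rw [ham_card]
    have heq : (Finset.univ.filter fun k => sw i x y k ≠ y k)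
        = (Finset.univ.filter fun k => x k ≠ y k).erase i := by
      ext k
      by_cases hk : k = i
      · subst hk; simp [sw]
      · simp [sw, hk]
    rw [heq, Finset.card_erase_of_mem (by simp [hne]), ← ham_card, hd]
  exact (ReflTransGen.single ⟨hx, hm, h1⟩).tail ⟨hm, hy, h2⟩

lemma coe_update (a : Idx n r) (i : Fin n) (v : Fin (r i)) (k : Fin n) :
    ((Function.update a i v) k : ℕ) = if k = i then (v : ℕ) else (a k : ℕ) := by
  rcases eq_or_ne k i with rfl | h
  · simp
  · simp [Function.update_of_ne h, h]

lemma update2_apply {n : ℕ} (g : Fin n → ℕ) {i j : Fin n} (hij : i ≠ j) {vi vj : ℕ}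
    (k : Fin n) :
    Function.update (Function.update g i vi) j vj k
      = if k = i then vi else if k = j then vj else g k := by
  rcases eq_or_ne k j with rfl | hkj
  · rw [Function.update_self, if_neg (Ne.symm hij), if_pos rfl]
  · rcases eq_or_ne k i with rfl | hki
    · simp [Function.update_of_ne hkj]
    · rw [Function.update_of_ne hkj, Function.update_of_ne hki, if_neg hki, if_neg hkj]

/-- transfer one unit from coordinate `j` to coordinate `i`, when one of them is `< t`. -/
lemma transfer_t (hS : Switchable n s t r S)
    {a : Idx n r} (ha : a ∈ S) {i j : Fin n} (hij : i ≠ j) (his : (i : ℕ) < s)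
    (hjs : (j : ℕ) < s) (hi : (a i : ℕ) + 1 < r i) (hj : 1 ≤ (a j : ℕ))
    (hit : (i : ℕ) < t ∨ (j : ℕ) < t) :
    ∃ a₂ ∈ S, sEquiv n s r a a₂ ∧ ReflTransGen (AdjRel S) a a₂ ∧
      ∀ k, (a₂ k : ℕ) = if k = i then (a i : ℕ) + 1 else if k = j then (a j : ℕ) - 1 else a k := by
  set vi : Fin (r i) := ⟨(a i : ℕ) + 1, hi⟩ with hvi
  set vj : Fin (r j) := ⟨(a j : ℕ) - 1, lt_of_le_of_lt (Nat.sub_le _ _) (a j).2⟩ with hvj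
  set a₂ : Idx n r := Function.update (Function.update a i vi) j vj with ha₂
  have spec : ∀ k, (a₂ k : ℕ) =
      if k = i then (a i : ℕ) + 1 else if k = j then (a j : ℕ) - 1 else a k := by
    intro k
    rw [ha₂, coe_update, coe_update]
    by_cases hk : k = i
    · subst hk; simp [hij, hvi]
    · by_cases hk' : k = j
      · subst hk'; simp [Ne.symm hij, hvj]
      · simp [hk, hk']
  have hcoe : (fun k => (a₂ k : ℕ)) =
      Function.update (Function.update (fun k => (a k : ℕ)) i ((a i : ℕ) + 1)) j ((a j : ℕ) - 1) := by
    funext k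
    rw [spec k, update2_apply _ hij]
  have hne_i : a i ≠ a₂ i := fun h => by
    have := congrArg Fin.val h; rw [spec i, if_pos rfl] at this; omega
  have hne_j : a j ≠ a₂ j := fun h => by
    have := congrArg Fin.val h
    rw [spec j, if_neg (fun h' => hij h'.symm), if_pos rfl] at this; omega
  have heq_k : ∀ k, k ≠ i → k ≠ j → a k = a₂ k := fun k hki hkj =>
    Fin.ext (by rw [spec k, if_neg hki, if_neg hkj])
  have hseq : sEquiv n s r a a₂ := by
    constructor
    · have hiF : i ∈ Finset.univ.filter (fun k : Fin n => (k : ℕ) < s) := by simp [his]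
      have hjF : j ∈ Finset.univ.filter (fun k : Fin n => (k : ℕ) < s) := by simp [hjs]
      set F := Finset.univ.filter (fun k : Fin n => (k : ℕ) < s) with hF
      have hiF' : i ∈ F \ {j} := Finset.mem_sdiff.mpr ⟨hiF, by simp [hij]⟩
      have h1 : ∑ k ∈ F, (a₂ k : ℕ) =
          ((a j : ℕ) - 1) + (((a i : ℕ) + 1) + ∑ k ∈ (F \ {j}) \ {i}, (a k : ℕ)) := by
        calc ∑ k ∈ F, (a₂ k : ℕ)
            = ∑ k ∈ F, Function.update (Function.update (fun k => (a k : ℕ)) i ((a i : ℕ) + 1)) j ((a j : ℕ) - 1) k := by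
              rw [← hcoe]
          _ = ((a j : ℕ) - 1) + ∑ k ∈ F \ {j}, Function.update (fun k => (a k : ℕ)) i ((a i : ℕ) + 1) k :=
              Finset.sum_update_of_mem hjF _ _
          _ = ((a j : ℕ) - 1) + (((a i : ℕ) + 1) + ∑ k ∈ (F \ {j}) \ {i}, (a k : ℕ)) := by
              rw [Finset.sum_update_of_mem hiF']
      rw [h1, Finset.sum_eq_sum_sdiff_singleton_add hjF,
        Finset.sum_eq_sum_sdiff_singleton_add hiF' (fun k => ((a k : ℕ)))]
      omega
    · intro k hk
      have hki : k ≠ i := by rintro rfl; omega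
      have hkj : k ≠ j := by rintro rfl; omega
      exact heq_k k hki hkj
  have ha₂S : a₂ ∈ S := hS.2 a a₂ ha hseq
  have hd2 : hammingDist a a₂ = 2 := by
    rw [ham_card]
    have : (Finset.univ.filter fun k => a k ≠ a₂ k) = {i, j} := by
      ext k
      simp only [Finset.mem_filter, Finset.mem_univ, true_and, Finset.mem_insert,
        Finset.mem_singleton]
      constructor
      · intro h
        by_contra hc
        push_neg at hc
        exact h (heq_k k hc.1 hc.2)
      · rintro (rfl | rfl)
        · exact hne_i
        · exact hne_j
    rw [this, Finset.card_insert_of_notMem (by simpa using hij), Finset.card_singleton]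
  rcases hit with hit | hit
  · exact ⟨a₂, ha₂S, hseq, two_step hS ha ha₂S hd2 hit hne_i, spec⟩
  · exact ⟨a₂, ha₂S, hseq, two_step hS ha ha₂S hd2 hit hne_j, spec⟩

end Helpers2

section Helpers3
open Relation
variable {n s t : ℕ} {r : Fin n → ℕ} {S : Set (Idx n r)}

lemma transfer (hS : Switchable n s t r S) (hs1 : 1 ≤ s) (ht1 : 1 ≤ t) (hr : ∀ i, 2 ≤ r i)
    {a : Idx n r} (ha : a ∈ S) {i j : Fin n} (hij : i ≠ j) (his : (i : ℕ) < s)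
    (hjs : (j : ℕ) < s) (hi : (a i : ℕ) + 1 < r i) (hj : 1 ≤ (a j : ℕ)) :
    ∃ a₂ ∈ S, sEquiv n s r a a₂ ∧ ReflTransGen (AdjRel S) a a₂ ∧
      ∀ k, (a₂ k : ℕ) = if k = i then (a i : ℕ) + 1 else if k = j then (a j : ℕ) - 1 else a k := by
  by_cases hit : (i : ℕ) < t ∨ (j : ℕ) < t
  · exact transfer_t hS ha hij his hjs hi hj hit
  · push_neg at hit
    obtain ⟨hti, htj⟩ := hit
    set z : Fin n := ⟨0, i.pos⟩ with hz
    have hz0 : (z : ℕ) = 0 := rfl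
    have hzt : (z : ℕ) < t := by omega
    have hzs : (z : ℕ) < s := by omega
    have hzi : z ≠ i := fun h => by
      have := congrArg Fin.val h; rw [hz0] at this; omega
    have hzj : z ≠ j := fun h => by
      have := congrArg Fin.val h; rw [hz0] at this; omega
    rcases lt_or_ge ((a z : ℕ) + 1) (r z) with hza | hza
    · -- transfer j → z, then z → i
      obtain ⟨a₁, ha₁S, hseq₁, hrtg₁, spec₁⟩ :=
        transfer_t hS ha hzj hzs hjs hza hj (Or.inl hzt)
      have h1i : (a₁ i : ℕ) = a i := by
        rw [spec₁ i, if_neg (Ne.symm hzi), if_neg hij]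
      have h1z : (a₁ z : ℕ) = (a z : ℕ) + 1 := by rw [spec₁ z, if_pos rfl]
      have h1j : (a₁ j : ℕ) = (a j : ℕ) - 1 := by
        rw [spec₁ j, if_neg (Ne.symm hzj), if_pos rfl]
      obtain ⟨a₃, ha₃S, hseq₃, hrtg₃, spec₃⟩ :=
        transfer_t hS ha₁S (Ne.symm hzi) his hzs (by omega) (by omega) (Or.inr hzt)
      refine ⟨a₃, ha₃S, sEquiv_trans hseq₁ hseq₃, hrtg₁.trans hrtg₃, ?_⟩
      intro k
      rw [spec₃ k]
      by_cases hk : k = i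
      · rw [if_pos hk, if_pos hk, h1i]
      · rw [if_neg hk, if_neg hk]
        by_cases hk' : k = z
        · rw [if_pos hk', hk', if_neg hzj, h1z]; omega
        · rw [if_neg hk', spec₁ k, if_neg hk']
    · -- transfer z → i, then j → z
      have hz1 : 1 ≤ (a z : ℕ) := by have := hr z; omega
      obtain ⟨a₁, ha₁S, hseq₁, hrtg₁, spec₁⟩ :=
        transfer_t hS ha hzi.symm his hzs hi hz1 (Or.inr hzt)
      have h1i : (a₁ i : ℕ) = (a i : ℕ) + 1 := by rw [spec₁ i, if_pos rfl]
      have h1z : (a₁ z : ℕ) = (a z : ℕ) - 1 := by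
        rw [spec₁ z, if_neg hzi, if_pos rfl]
      have h1j : (a₁ j : ℕ) = (a j : ℕ) := by
        rw [spec₁ j, if_neg hij.symm, if_neg (Ne.symm hzj)]
      obtain ⟨a₃, ha₃S, hseq₃, hrtg₃, spec₃⟩ :=
        transfer_t hS ha₁S hzj hzs hjs (by omega) (by omega) (Or.inl hzt)
      refine ⟨a₃, ha₃S, sEquiv_trans hseq₁ hseq₃, hrtg₁.trans hrtg₃, ?_⟩
      intro k
      rw [spec₃ k]
      by_cases hk : k = z
      · rw [if_pos hk, hk, if_neg hzi, if_neg hzj, h1z]; omega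
      · rw [if_neg hk]
        by_cases hk' : k = j
        · rw [if_pos hk', if_pos hk', hk']
          rw [if_neg hij.symm] at *
          rw [h1j]
        · rw [if_neg hk', spec₁ k, if_neg hk]
          by_cases hk'' : k = i
          · rw [if_pos hk'', if_pos hk'']
          · rw [if_neg hk'', if_neg hk'', if_neg hk']

lemma exists_up_down {F : Finset (Fin n)} {f g : Fin n → ℕ}
    (hsum : ∑ i ∈ F, f i = ∑ i ∈ F, g i) {i0 : Fin n} (hi0 : i0 ∈ F) (hne : f i0 ≠ g i0) :
    (∃ i ∈ F, f i < g i) ∧ (∃ j ∈ F, g j < f j) := by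
  constructor
  · by_contra h
    push_neg at h
    have : ∑ i ∈ F, g i < ∑ i ∈ F, f i :=
      Finset.sum_lt_sum (fun i hi => h i hi)
        ⟨i0, hi0, lt_of_le_of_ne (h i0 hi0) (fun e => hne e.symm)⟩
    omega
  · by_contra h
    push_neg at h
    have : ∑ i ∈ F, f i < ∑ i ∈ F, g i :=
      Finset.sum_lt_sum (fun i hi => h i hi) ⟨i0, hi0, lt_of_le_of_ne (h i0 hi0) hne⟩
    omega

lemma sequiv_rtg (hS : Switchable n s t r S) (hs1 : 1 ≤ s) (ht1 : 1 ≤ t)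
    (hr : ∀ i, 2 ≤ r i) :
    ∀ d (a b : Idx n r), a ∈ S → sEquiv n s r a b →
      (∑ k, Nat.dist (a k) (b k)) ≤ d → ReflTransGen (AdjRel S) a b := by
  intro d
  induction d with
  | zero =>
    intro a b ha hab hd
    have h0 : ∀ k, Nat.dist (a k) (b k) = 0 := by
      intro k
      have h1 := Finset.single_le_sum (f := fun k => Nat.dist (↑(a k)) (↑(b k)))
        (fun k _ => Nat.zero_le _) (Finset.mem_univ k)
      exact Nat.le_zero.mp (le_trans h1 hd)
    have : a = b := funext fun k => Fin.ext (Nat.eq_of_dist_eq_zero (h0 k))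
    exact this ▸ ReflTransGen.refl
  | succ d ih =>
    intro a b ha hab hd
    by_cases hab' : a = b
    · exact hab' ▸ ReflTransGen.refl
    · obtain ⟨k0, hk0⟩ := Function.ne_iff.mp hab'
      have hk0s : (k0 : ℕ) < s := by
        by_contra h
        exact hk0 (hab.2 k0 (le_of_not_gt h))
      have hk0F : k0 ∈ Finset.univ.filter (fun k : Fin n => (k : ℕ) < s) := by simp [hk0s]
      have hk0v : (a k0 : ℕ) ≠ (b k0 : ℕ) := fun h => hk0 (Fin.ext h)
      obtain ⟨⟨i, hiF, hilt⟩, ⟨j, hjF, hjlt⟩⟩ := exists_up_down hab.1 hk0F hk0v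
      have his : (i : ℕ) < s := (Finset.mem_filter.mp hiF).2
      have hjs : (j : ℕ) < s := (Finset.mem_filter.mp hjF).2
      have hij : i ≠ j := fun h => by rw [h] at hilt; omega
      have hi : (a i : ℕ) + 1 < r i := lt_of_le_of_lt hilt (b i).isLt
      have hj : 1 ≤ (a j : ℕ) := by omega
      obtain ⟨a₂, ha₂S, hseq, hrtg, spec⟩ := transfer hS hs1 ht1 hr ha hij his hjs hi hj
      have hseq₂ : sEquiv n s r a₂ b := sEquiv_trans (sEquiv_symm hseq) hab
      have hlt : ∑ k, Nat.dist (a₂ k) (b k) < ∑ k, Nat.dist (a k) (b k) := by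
        apply Finset.sum_lt_sum
        · intro k _
          rw [spec k]
          by_cases hk : k = i
          · rw [if_pos hk, hk]; unfold Nat.dist; omega
          · rw [if_neg hk]
            by_cases hk' : k = j
            · rw [if_pos hk', hk']; unfold Nat.dist; omega
            · rw [if_neg hk']
        · refine ⟨i, Finset.mem_univ i, ?_⟩
          rw [spec i, if_pos rfl]
          unfold Nat.dist; omega
      exact hrtg.trans (ih a₂ b ha₂S hseq₂ (by omega))

end Helpers3

/-- every connectedness class inside an `(s,t)`-switchable set `S`
is itself an `(s,t)`-switchable set. -/
theorem connectedness_class_switchable (n s t : ℕ) (r : Fin n → ℕ)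
    (hs1 : 1 ≤ s) (hsn : s ≤ n) (ht1 : 1 ≤ t) (htn : t ≤ n) (hr : ∀ i, 2 ≤ r i)
    (S : Set (Idx n r)) (hS : Switchable n s t r S)
    (a₀ : Idx n r) (ha₀ : a₀ ∈ S) :
    Switchable n s t r {b | ConnectedIn S a₀ b} := by
  constructor
  · intro a b ha hb hd i hi
    obtain ⟨-, haS, hra⟩ := rtg_of_conn ha
    obtain ⟨-, hbS, hrb⟩ := rtg_of_conn hb
    by_cases he : a i = b i
    · have heq : sw i a b = a := by
        funext j
        simp only [sw]
        split
        · next h => subst h; exact he.symm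
        · rfl
      rw [Set.mem_setOf_eq, heq]
      exact ha
    · have hm : sw i a b ∈ S := hS.1 a b haS hbS hd i hi
      have h1 : hammingDist a (sw i a b) = 1 := by
        rw [ham_card]
        have : (Finset.univ.filter fun k => a k ≠ sw i a b k) = {i} := by
          ext k
          by_cases hk : k = i
          · subst hk; simp [sw, he]
          · simp [sw, hk]
        rw [this, Finset.card_singleton]
      exact conn_of_rtg ha₀ (hra.tail ⟨haS, hm, h1⟩)
  · intro a b ha hab
    obtain ⟨-, haS, hra⟩ := rtg_of_conn ha
    have hrb := sequiv_rtg hS hs1 ht1 hr (∑ k, Nat.dist (a k) (b k)) a b haS hab le_rfl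
    exact conn_of_rtg ha₀ (hra.trans hrb)
end

section
/- Let s ≥ 2 and let S be an (s,t)-switchable set containing an element a with (a_1,…,a_s) ≠ (1,…,1) and (a_1,…,a_s) ≠ (r_1,…,r_s). Then every b ∈ N with (b_{s+1},…,b_n) = (a_{s+1},…,a_n) belongs to S. -/
open Finset

/-- The block of the first `s` indices. -/
def blk (n s : ℕ) : Finset (Fin n) := Finset.univ.filter (fun i : Fin n => (i : ℕ) < s)

lemma mem_blk {n s : ℕ} {i : Fin n} : i ∈ blk n s ↔ (i : ℕ) < s := by simp [blk]

/-- Gluing a natural-valued block onto the tail of `a`. -/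
def glue {n : ℕ} (r : Fin n → ℕ) (a : Idx n r) (s : ℕ) (g : Fin n → ℕ)
    (hg : ∀ i : Fin n, (i : ℕ) < s → g i < r i) : Idx n r :=
  fun i => if h : (i : ℕ) < s then ⟨g i, hg i h⟩ else a i

lemma glue_tail {n : ℕ} (r : Fin n → ℕ) (a : Idx n r) (s : ℕ) (g : Fin n → ℕ)
    (hg : ∀ i : Fin n, (i : ℕ) < s → g i < r i) (i : Fin n) (hi : s ≤ (i : ℕ)) :
    glue r a s g hg i = a i := by
  simp [glue, Nat.not_lt.mpr hi]

lemma glue_val {n : ℕ} (r : Fin n → ℕ) (a : Idx n r) (s : ℕ) (g : Fin n → ℕ)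
    (hg : ∀ i : Fin n, (i : ℕ) < s → g i < r i) (i : Fin n) (hi : (i : ℕ) < s) :
    (glue r a s g hg i : ℕ) = g i := by
  simp [glue, hi]

lemma glue_sum {n : ℕ} (r : Fin n → ℕ) (a : Idx n r) (s : ℕ) (g : Fin n → ℕ)
    (hg : ∀ i : Fin n, (i : ℕ) < s → g i < r i) :
    ∑ i ∈ blk n s, (glue r a s g hg i : ℕ) = ∑ i ∈ blk n s, g i :=
  Finset.sum_congr rfl fun i hi => glue_val r a s g hg i (mem_blk.mp hi)

/-- Distributing an amount `m` below given bounds over a finite set. -/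
lemma exists_distrib {ι : Type*} [DecidableEq ι] (T : Finset ι) (c : ι → ℕ) :
    ∀ m, m ≤ ∑ i ∈ T, c i →
      ∃ g : ι → ℕ, (∀ i ∈ T, g i ≤ c i) ∧ (∀ i ∉ T, g i = 0) ∧ ∑ i ∈ T, g i = m := by
  classical
  induction T using Finset.induction_on with
  | empty =>
    intro m hm
    simp only [Finset.sum_empty, Nat.le_zero] at hm
    exact ⟨fun _ => 0, by simp, by simp, by simp [hm]⟩
  | @insert i T' hi ih =>
    intro m hm
    rw [Finset.sum_insert hi] at hm
    obtain ⟨g', hg'1, hg'2, hg'3⟩ := ih (m - min m (c i)) (by omega)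
    refine ⟨fun j => if j = i then min m (c i) else g' j, ?_, ?_, ?_⟩
    · intro j hj
      by_cases h : j = i
      · subst h; simp
      · simp only [if_neg h]
        exact hg'1 j (by simp_all [Finset.mem_insert])
    · intro j hj
      have hji : j ≠ i := by rintro rfl; exact hj (Finset.mem_insert_self _ _)
      simp only [if_neg hji]
      exact hg'2 j (fun h => hj (Finset.mem_insert_of_mem h))
    · rw [Finset.sum_insert hi, if_pos rfl]
      have : ∑ j ∈ T', (if j = i then min m (c i) else g' j) = ∑ j ∈ T', g' j :=
        Finset.sum_congr rfl fun j hj => if_neg (by rintro rfl; exact hi hj)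
      rw [this, hg'3]; omega

/-- Core step: from two elements of the block differing exactly at `i0` and `j`
with equal sums, the switch at `i0` produces all elements with the mixed sum. -/
lemma core_step (n s t : ℕ) (r : Fin n → ℕ) (hs2 : 2 ≤ s) (hsn : s ≤ n) (ht1 : 1 ≤ t)
    (hr : ∀ i, 2 ≤ r i) (S : Set (Idx n r)) (hS : Switchable n s t r S)
    (a : Idx n r) (m : ℕ)
    (hP : ∀ x : Idx n r, (∀ i : Fin n, s ≤ (i : ℕ) → x i = a i) →
        ∑ i ∈ blk n s, (x i : ℕ) = m → x ∈ S)
    (g g' : Fin n → ℕ)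
    (hgb : ∀ i : Fin n, (i : ℕ) < s → g i ≤ r i - 1)
    (hgb' : ∀ i : Fin n, (i : ℕ) < s → g' i ≤ r i - 1)
    (i0 j : Fin n) (hi0 : (i0 : ℕ) = 0) (hjs : (j : ℕ) < s) (hj0 : (j : ℕ) ≠ 0)
    (hne0 : g i0 ≠ g' i0) (hnej : g j ≠ g' j)
    (heq : ∀ i : Fin n, i ≠ i0 → i ≠ j → g i = g' i)
    (hsum : ∑ i ∈ blk n s, g i = m) (hsum' : ∑ i ∈ blk n s, g' i = m) :
    ∀ w : Idx n r, (∀ i : Fin n, s ≤ (i : ℕ) → w i = a i) →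
      ∑ i ∈ blk n s, (w i : ℕ) = g' i0 + ∑ i ∈ (blk n s).erase i0, g i → w ∈ S := by
  have hlt : ∀ i : Fin n, (i : ℕ) < s → g i < r i := fun i hi => by
    have := hgb i hi; have := hr i; omega
  have hlt' : ∀ i : Fin n, (i : ℕ) < s → g' i < r i := fun i hi => by
    have := hgb' i hi; have := hr i; omega
  have hxv : ∀ i : Fin n, (i : ℕ) < s → (glue r a s g hlt i : ℕ) = g i :=
    fun i hi => glue_val r a s g hlt i hi
  have hyv : ∀ i : Fin n, (i : ℕ) < s → (glue r a s g' hlt' i : ℕ) = g' i :=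
    fun i hi => glue_val r a s g' hlt' i hi
  have hi0s : (i0 : ℕ) < s := by omega
  have hi0b : i0 ∈ blk n s := mem_blk.mpr hi0s
  have hi0j : i0 ≠ j := fun h => hj0 (by rw [← h]; exact hi0)
  have hxS : glue r a s g hlt ∈ S :=
    hP _ (glue_tail r a s g hlt) (by rw [glue_sum]; exact hsum)
  have hyS : glue r a s g' hlt' ∈ S :=
    hP _ (glue_tail r a s g' hlt') (by rw [glue_sum]; exact hsum')
  have hxyval : ∀ i : Fin n,
      (glue r a s g hlt i = glue r a s g' hlt' i ↔ g i = g' i) ∨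
      ((i : ℕ) ≥ s ∧ glue r a s g hlt i = glue r a s g' hlt' i) := by
    intro i
    by_cases h : (i : ℕ) < s
    · left
      constructor
      · intro he
        have h2 := congrArg Fin.val he
        rwa [hxv i h, hyv i h] at h2
      · intro he
        apply Fin.ext
        rw [hxv i h, hyv i h, he]
    · right
      exact ⟨by omega, by rw [glue_tail r a s g hlt i (by omega),
        glue_tail r a s g' hlt' i (by omega)]⟩
  have hdist : hammingDist (glue r a s g hlt) (glue r a s g' hlt') = 2 := by
    have hfilter : (Finset.univ.filter
        fun i => glue r a s g hlt i ≠ glue r a s g' hlt' i) = {i0, j} := by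
      ext i
      simp only [Finset.mem_filter, Finset.mem_univ, true_and, Finset.mem_insert,
        Finset.mem_singleton]
      constructor
      · intro hne
        by_contra hc
        push_neg at hc
        rcases hxyval i with hiff | ⟨_, heqv⟩
        · exact hne (hiff.mpr (heq i hc.1 hc.2))
        · exact hne heqv
      · rintro (rfl | rfl)
        · rcases hxyval i with hiff | ⟨hge, _⟩
          · exact fun h => hne0 (hiff.mp h)
          · omega
        · rcases hxyval i with hiff | ⟨hge, _⟩
          · exact fun h => hnej (hiff.mp h)
          · omega
    show (Finset.univ.filter
        fun i => glue r a s g hlt i ≠ glue r a s g' hlt' i).card = 2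
    rw [hfilter]
    exact Finset.card_pair hi0j
  have hzS : sw i0 (glue r a s g hlt) (glue r a s g' hlt') ∈ S :=
    hS.1 _ _ hxS hyS hdist i0 (by omega)
  have hzval : ∀ i : Fin n, sw i0 (glue r a s g hlt) (glue r a s g' hlt') i =
      if i = i0 then glue r a s g' hlt' i else glue r a s g hlt i := fun i => rfl
  have hztail : ∀ i : Fin n, s ≤ (i : ℕ) →
      sw i0 (glue r a s g hlt) (glue r a s g' hlt') i = a i := by
    intro i hi
    have hne : i ≠ i0 := fun h => by subst h; omega
    rw [hzval, if_neg hne]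
    exact glue_tail r a s g hlt i hi
  have hzsum : ∑ i ∈ blk n s, ((sw i0 (glue r a s g hlt) (glue r a s g' hlt')) i : ℕ) =
      g' i0 + ∑ i ∈ (blk n s).erase i0, g i := by
    rw [← Finset.add_sum_erase _ _ hi0b]
    congr 1
    · rw [hzval, if_pos rfl]
      exact hyv i0 hi0s
    · apply Finset.sum_congr rfl
      intro i hi
      have hii0 : i ≠ i0 := (Finset.mem_erase.mp hi).1
      have his : (i : ℕ) < s := mem_blk.mp (Finset.mem_erase.mp hi).2
      rw [hzval, if_neg hii0]
      exact hxv i his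
  intro w hwtail hwsum
  refine hS.2 _ w hzS ⟨?_, ?_⟩
  · show ∑ i ∈ blk n s, ((sw i0 (glue r a s g hlt) (glue r a s g' hlt')) i : ℕ) =
      ∑ i ∈ blk n s, (w i : ℕ)
    rw [hzsum, hwsum]
  · intro i hi
    rw [hztail i hi, hwtail i hi]


/-- Going one step up in the block sum. -/
lemma step_up (n s t : ℕ) (r : Fin n → ℕ) (hs2 : 2 ≤ s) (hsn : s ≤ n) (ht1 : 1 ≤ t)
    (hr : ∀ i, 2 ≤ r i) (S : Set (Idx n r)) (hS : Switchable n s t r S)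
    (a : Idx n r) (m : ℕ) (hm1 : 1 ≤ m) (hmM : m + 1 ≤ ∑ i ∈ blk n s, (r i - 1))
    (hP : ∀ x : Idx n r, (∀ i : Fin n, s ≤ (i : ℕ) → x i = a i) →
        ∑ i ∈ blk n s, (x i : ℕ) = m → x ∈ S) :
    ∀ x : Idx n r, (∀ i : Fin n, s ≤ (i : ℕ) → x i = a i) →
        ∑ i ∈ blk n s, (x i : ℕ) = m + 1 → x ∈ S := by
  classical
  have hn : 0 < n := by omega
  obtain ⟨i0, hi0⟩ : ∃ i : Fin n, (i : ℕ) = 0 := ⟨⟨0, hn⟩, rfl⟩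
  obtain ⟨i1, hi1⟩ : ∃ i : Fin n, (i : ℕ) = 1 := ⟨⟨1, by omega⟩, rfl⟩
  have hi0B : i0 ∈ blk n s := mem_blk.mpr (by omega)
  have hi1T : i1 ∈ (blk n s).erase i0 :=
    Finset.mem_erase.mpr ⟨fun h => by have := congrArg Fin.val h; omega,
      mem_blk.mpr (by omega)⟩
  set M' := ∑ i ∈ (blk n s).erase i0, (r i - 1) with hM'
  have hM'1 : 1 ≤ M' := by
    have h1 : r i1 - 1 ≤ M' :=
      Finset.single_le_sum (f := fun i => r i - 1) (fun _ _ => Nat.zero_le _) hi1T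
    have := hr i1; omega
  have hsplit : ∑ i ∈ blk n s, (r i - 1) = (r i0 - 1) + M' :=
    (Finset.add_sum_erase _ _ hi0B).symm
  have hri0 : 2 ≤ r i0 := hr i0
  obtain ⟨g₀, hg₀b, hg₀z, hg₀s⟩ := exists_distrib ((blk n s).erase i0)
    (fun i => r i - 1) (min m M') (min_le_right _ _)
  set g : Fin n → ℕ := fun i => if i = i0 then m - min m M' else g₀ i with hgdef
  have hgi0 : g i0 = m - min m M' := if_pos rfl
  have hgT : ∀ i ∈ (blk n s).erase i0, g i = g₀ i := fun i hi =>
    if_neg (Finset.mem_erase.mp hi).1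
  have hgsumT : ∑ i ∈ (blk n s).erase i0, g i = min m M' := by
    rw [Finset.sum_congr rfl hgT, hg₀s]
  have hgsum : ∑ i ∈ blk n s, g i = m := by
    rw [← Finset.add_sum_erase _ _ hi0B, hgi0, hgsumT]; omega
  have hgi0b : g i0 + 1 ≤ r i0 - 1 := by rw [hgi0]; omega
  have hgb : ∀ i : Fin n, (i : ℕ) < s → g i ≤ r i - 1 := by
    intro i hi
    by_cases h : i = i0
    · subst h; omega
    · rw [hgdef]; simp only [if_neg h]
      exact hg₀b i (Finset.mem_erase.mpr ⟨h, mem_blk.mpr hi⟩)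
  -- pick j with g j ≥ 1
  obtain ⟨j, hjT, hjne⟩ : ∃ j ∈ (blk n s).erase i0, g₀ j ≠ 0 :=
    Finset.exists_ne_zero_of_sum_ne_zero (by rw [hg₀s]; omega)
  have hji0 : j ≠ i0 := (Finset.mem_erase.mp hjT).1
  have hjs : (j : ℕ) < s := mem_blk.mp (Finset.mem_erase.mp hjT).2
  have hj0 : (j : ℕ) ≠ 0 := fun h => hji0 (Fin.ext (by omega))
  have hgj : g j = g₀ j := hgT j hjT
  have hjB : j ∈ blk n s := mem_blk.mpr hjs
  set g' : Fin n → ℕ :=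
    fun i => if i = i0 then g i0 + 1 else if i = j then g j - 1 else g i with hg'def
  have hg'i0 : g' i0 = g i0 + 1 := if_pos rfl
  have hg'j : g' j = g j - 1 := by rw [hg'def]; simp [hji0]
  have hg'eq : ∀ i : Fin n, i ≠ i0 → i ≠ j → g i = g' i := by
    intro i h1 h2; rw [hg'def]; simp only [if_neg h1, if_neg h2]
  have hg'b : ∀ i : Fin n, (i : ℕ) < s → g' i ≤ r i - 1 := by
    intro i hi
    by_cases h1 : i = i0
    · subst h1; omega
    · by_cases h2 : i = j
      · subst h2; rw [hg'j]; have := hgb i hi; omega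
      · rw [← hg'eq i h1 h2]; exact hgb i hi
  have hjTe : j ∈ (blk n s).erase i0 := hjT
  have e1 : ∑ i ∈ blk n s, g i = g i0 + (g j + ∑ i ∈ ((blk n s).erase i0).erase j, g i) := by
    rw [← Finset.add_sum_erase _ _ hi0B, ← Finset.add_sum_erase _ _ hjTe]
  have e2 : ∑ i ∈ blk n s, g' i =
      g' i0 + (g' j + ∑ i ∈ ((blk n s).erase i0).erase j, g' i) := by
    rw [← Finset.add_sum_erase _ _ hi0B, ← Finset.add_sum_erase _ _ hjTe]
  have e3 : ∑ i ∈ ((blk n s).erase i0).erase j, g' i =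
      ∑ i ∈ ((blk n s).erase i0).erase j, g i := by
    apply Finset.sum_congr rfl
    intro i hi
    exact (hg'eq i (Finset.mem_erase.mp (Finset.mem_erase.mp hi).2).1
      (Finset.mem_erase.mp hi).1).symm
  have hg'sum : ∑ i ∈ blk n s, g' i = m := by
    rw [e2, e3, hg'i0, hg'j]; omega
  have hkey := core_step n s t r hs2 hsn ht1 hr S hS a m hP g g' hgb hg'b i0 j hi0 hjs hj0
    (by omega) (by omega) hg'eq hgsum hg'sum
  intro x hx hsx
  exact hkey x hx (by rw [hsx, hgsumT, hg'i0, hgi0]; omega)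

/-- Going one step down in the block sum. -/
lemma step_down (n s t : ℕ) (r : Fin n → ℕ) (hs2 : 2 ≤ s) (hsn : s ≤ n) (ht1 : 1 ≤ t)
    (hr : ∀ i, 2 ≤ r i) (S : Set (Idx n r)) (hS : Switchable n s t r S)
    (a : Idx n r) (m : ℕ) (hm1 : 1 ≤ m) (hmM : m < ∑ i ∈ blk n s, (r i - 1))
    (hP : ∀ x : Idx n r, (∀ i : Fin n, s ≤ (i : ℕ) → x i = a i) →
        ∑ i ∈ blk n s, (x i : ℕ) = m → x ∈ S) :
    ∀ x : Idx n r, (∀ i : Fin n, s ≤ (i : ℕ) → x i = a i) →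
        ∑ i ∈ blk n s, (x i : ℕ) = m - 1 → x ∈ S := by
  classical
  have hn : 0 < n := by omega
  obtain ⟨i0, hi0⟩ : ∃ i : Fin n, (i : ℕ) = 0 := ⟨⟨0, hn⟩, rfl⟩
  obtain ⟨i1, hi1⟩ : ∃ i : Fin n, (i : ℕ) = 1 := ⟨⟨1, by omega⟩, rfl⟩
  have hi0B : i0 ∈ blk n s := mem_blk.mpr (by omega)
  have hi1T : i1 ∈ (blk n s).erase i0 :=
    Finset.mem_erase.mpr ⟨fun h => by have := congrArg Fin.val h; omega,
      mem_blk.mpr (by omega)⟩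
  set M' := ∑ i ∈ (blk n s).erase i0, (r i - 1) with hM'
  have hM'1 : 1 ≤ M' := by
    have h1 : r i1 - 1 ≤ M' :=
      Finset.single_le_sum (f := fun i => r i - 1) (fun _ _ => Nat.zero_le _) hi1T
    have := hr i1; omega
  have hsplit : ∑ i ∈ blk n s, (r i - 1) = (r i0 - 1) + M' :=
    (Finset.add_sum_erase _ _ hi0B).symm
  have hri0 : 2 ≤ r i0 := hr i0
  obtain ⟨g₀, hg₀b, hg₀z, hg₀s⟩ := exists_distrib ((blk n s).erase i0)
    (fun i => r i - 1) (m - min m (r i0 - 1)) (by show m - min m (r i0 - 1) ≤ M'; omega)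
  set g : Fin n → ℕ := fun i => if i = i0 then min m (r i0 - 1) else g₀ i with hgdef
  have hgi0 : g i0 = min m (r i0 - 1) := if_pos rfl
  have hgT : ∀ i ∈ (blk n s).erase i0, g i = g₀ i := fun i hi =>
    if_neg (Finset.mem_erase.mp hi).1
  have hgsumT : ∑ i ∈ (blk n s).erase i0, g i = m - min m (r i0 - 1) := by
    rw [Finset.sum_congr rfl hgT, hg₀s]
  have hgsum : ∑ i ∈ blk n s, g i = m := by
    rw [← Finset.add_sum_erase _ _ hi0B, hgi0, hgsumT]; omega
  have hgi01 : 1 ≤ g i0 := by rw [hgi0]; omega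
  have hgb : ∀ i : Fin n, (i : ℕ) < s → g i ≤ r i - 1 := by
    intro i hi
    by_cases h : i = i0
    · subst h; omega
    · rw [hgdef]; simp only [if_neg h]
      exact hg₀b i (Finset.mem_erase.mpr ⟨h, mem_blk.mpr hi⟩)
  -- pick j with g j < r j - 1
  obtain ⟨j, hjT, hjne⟩ : ∃ j ∈ (blk n s).erase i0, g₀ j ≠ r j - 1 := by
    by_contra hc
    push_neg at hc
    have : ∑ i ∈ (blk n s).erase i0, g₀ i = M' := Finset.sum_congr rfl hc
    rw [hg₀s] at this
    omega
  have hji0 : j ≠ i0 := (Finset.mem_erase.mp hjT).1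
  have hjs : (j : ℕ) < s := mem_blk.mp (Finset.mem_erase.mp hjT).2
  have hj0 : (j : ℕ) ≠ 0 := fun h => hji0 (Fin.ext (by omega))
  have hgj : g j = g₀ j := hgT j hjT
  have hgjb : g j + 1 ≤ r j - 1 := by
    have h1 := hg₀b j hjT
    rw [hgj]; omega
  set g' : Fin n → ℕ :=
    fun i => if i = i0 then g i0 - 1 else if i = j then g j + 1 else g i with hg'def
  have hg'i0 : g' i0 = g i0 - 1 := if_pos rfl
  have hg'j : g' j = g j + 1 := by rw [hg'def]; simp [hji0]
  have hg'eq : ∀ i : Fin n, i ≠ i0 → i ≠ j → g i = g' i := by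
    intro i h1 h2; rw [hg'def]; simp only [if_neg h1, if_neg h2]
  have hg'b : ∀ i : Fin n, (i : ℕ) < s → g' i ≤ r i - 1 := by
    intro i hi
    by_cases h1 : i = i0
    · subst h1; rw [hg'i0]; have := hgb i hi; omega
    · by_cases h2 : i = j
      · subst h2; omega
      · rw [← hg'eq i h1 h2]; exact hgb i hi
  have hjTe : j ∈ (blk n s).erase i0 := hjT
  have e1 : ∑ i ∈ blk n s, g i = g i0 + (g j + ∑ i ∈ ((blk n s).erase i0).erase j, g i) := by
    rw [← Finset.add_sum_erase _ _ hi0B, ← Finset.add_sum_erase _ _ hjTe]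
  have e2 : ∑ i ∈ blk n s, g' i =
      g' i0 + (g' j + ∑ i ∈ ((blk n s).erase i0).erase j, g' i) := by
    rw [← Finset.add_sum_erase _ _ hi0B, ← Finset.add_sum_erase _ _ hjTe]
  have e3 : ∑ i ∈ ((blk n s).erase i0).erase j, g' i =
      ∑ i ∈ ((blk n s).erase i0).erase j, g i := by
    apply Finset.sum_congr rfl
    intro i hi
    exact (hg'eq i (Finset.mem_erase.mp (Finset.mem_erase.mp hi).2).1
      (Finset.mem_erase.mp hi).1).symm
  have hg'sum : ∑ i ∈ blk n s, g' i = m := by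
    rw [e2, e3, hg'i0, hg'j]; omega
  have hkey := core_step n s t r hs2 hsn ht1 hr S hS a m hP g g' hgb hg'b i0 j hi0 hjs hj0
    (by omega) (by omega) hg'eq hgsum hg'sum
  intro x hx hsx
  exact hkey x hx (by rw [hsx, hgsumT, hg'i0]; omega)

/-- if `s ≥ 2` and an `(s,t)`-switchable set `S` contains an element `a`
whose first `s` components are neither all `1` nor all maximal, then every `b` agreeing
with `a` in the components beyond `s` belongs to `S`. -/
theorem switchable_contains_all_with_same_tail (n s t : ℕ) (r : Fin n → ℕ)
    (hs2 : 2 ≤ s) (hsn : s ≤ n) (ht1 : 1 ≤ t) (htn : t ≤ n) (hr : ∀ i, 2 ≤ r i)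
    (S : Set (Idx n r)) (hS : Switchable n s t r S)
    (a : Idx n r) (ha : a ∈ S)
    (hnotbot : ∃ j : Fin n, (j : ℕ) < s ∧ (a j : ℕ) ≠ 0)
    (hnottop : ∃ j : Fin n, (j : ℕ) < s ∧ (a j : ℕ) ≠ r j - 1) :
    ∀ b : Idx n r, (∀ i : Fin n, s ≤ (i : ℕ) → b i = a i) → b ∈ S := by
  classical
  set σ := ∑ i ∈ blk n s, (a i : ℕ) with hσ
  set M := ∑ i ∈ blk n s, (r i - 1) with hM
  have hPσ : ∀ x : Idx n r, (∀ i : Fin n, s ≤ (i : ℕ) → x i = a i) →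
      ∑ i ∈ blk n s, (x i : ℕ) = σ → x ∈ S := by
    intro x hx hsx
    exact hS.2 a x ha ⟨hsx.symm, fun i hi => (hx i hi).symm⟩
  have hσ1 : 1 ≤ σ := by
    obtain ⟨j, hjs, hja⟩ := hnotbot
    have h1 : (a j : ℕ) ≤ σ := Finset.single_le_sum (f := fun i => ((a i : ℕ)))
      (fun _ _ => Nat.zero_le _) (mem_blk.mpr hjs)
    omega
  have hσM : σ < M := by
    obtain ⟨j, hjs, hja⟩ := hnottop
    apply Finset.sum_lt_sum
    · intro i _
      show (a i : ℕ) ≤ r i - 1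
      have := (a i).isLt; have := hr i; omega
    · refine ⟨j, mem_blk.mpr hjs, ?_⟩
      show (a j : ℕ) < r j - 1
      have := (a j).isLt; have := hr j; omega
  have up_all : ∀ k, σ + k ≤ M → ∀ x : Idx n r, (∀ i : Fin n, s ≤ (i : ℕ) → x i = a i) →
      ∑ i ∈ blk n s, (x i : ℕ) = σ + k → x ∈ S := by
    intro k
    induction k with
    | zero => intro _; exact hPσ
    | succ k ih =>
      intro hk
      exact step_up n s t r hs2 hsn ht1 hr S hS a (σ + k) (by omega) (by omega)
        (ih (by omega))
  have down_all : ∀ k, k ≤ σ → ∀ x : Idx n r, (∀ i : Fin n, s ≤ (i : ℕ) → x i = a i) →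
      ∑ i ∈ blk n s, (x i : ℕ) = σ - k → x ∈ S := by
    intro k
    induction k with
    | zero => intro _; exact hPσ
    | succ k ih =>
      intro hk
      exact step_down n s t r hs2 hsn ht1 hr S hS a (σ - k) (by omega) (by omega)
        (ih (by omega))
  intro b hb
  set mb := ∑ i ∈ blk n s, (b i : ℕ) with hmb
  have hmbM : mb ≤ M := by
    apply Finset.sum_le_sum
    intro i _
    show (b i : ℕ) ≤ r i - 1
    have := (b i).isLt; have := hr i; omega
  rcases le_or_gt σ mb with h | h
  · exact up_all (mb - σ) (by omega) b hb (by omega)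
  · exact down_all (σ - mb) (by omega) b hb (by omega)
end

section
/- For n ≥ 3, the (n,t)-switchable subsets of N are exactly: ∅, {(1,…,1)}, {(r_1,…,r_n)}, {(1,…,1), (r_1,…,r_n)}, and N itself. -/
open Finset

section Aux
variable {n : ℕ} {r : Fin n → ℕ}

/-- total sum of an index -/
def sig (a : Idx n r) : ℕ := ∑ i, (a i : ℕ)

lemma sEquiv_n_iff (a b : Idx n r) : sEquiv n n r a b ↔ sig a = sig b := by
  have hfil : (Finset.univ.filter (fun i : Fin n => (i : ℕ) < n)) = Finset.univ :=
    Finset.filter_true_of_mem (fun i _ => i.isLt)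
  unfold sEquiv sig
  rw [hfil]
  constructor
  · exact fun h => h.1
  · exact fun h => ⟨h, fun i hi => absurd i.isLt (by omega)⟩

lemma sig_le (hr : ∀ i, 2 ≤ r i) (a : Idx n r) : sig a ≤ ∑ i, (r i - 1) := by
  apply Finset.sum_le_sum
  intro i _
  have := (a i).isLt
  omega

lemma sig_eq_zero_iff (a : Idx n r) (bot : Idx n r) (hbot : ∀ i, (bot i : ℕ) = 0) :
    sig a = 0 ↔ a = bot := by
  constructor
  · intro h
    have h0 : ∀ i ∈ Finset.univ, (a i : ℕ) = 0 := by
      rw [← Finset.sum_eq_zero_iff]; exact h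
    funext i
    exact Fin.ext (by rw [h0 i (mem_univ i), hbot i])
  · intro h; subst h; unfold sig; simp [hbot]

lemma sig_eq_max_iff (hr : ∀ i, 2 ≤ r i) (a : Idx n r) (top : Idx n r)
    (htop : ∀ i, (top i : ℕ) = r i - 1) :
    sig a = ∑ i, (r i - 1) ↔ a = top := by
  constructor
  · intro h
    funext i
    refine Fin.ext ?_
    rw [htop i]
    by_contra hne
    have h1 : (a i : ℕ) < r i - 1 := by
      have := (a i).isLt; omega
    have h2 : sig a < ∑ i, (r i - 1) := by
      apply Finset.sum_lt_sum (fun j _ => by have := (a j).isLt; omega) ⟨i, mem_univ i, h1⟩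
    omega
  · intro h; subst h; unfold sig
    exact Finset.sum_congr rfl (fun i _ => htop i)

lemma fill (l u : Fin n → ℕ) (hlu : ∀ i, l i ≤ u i) :
    ∀ d, (∑ i, l i) + d ≤ ∑ i, u i → ∃ x : Fin n → ℕ,
      (∀ i, l i ≤ x i ∧ x i ≤ u i) ∧ ∑ i, x i = (∑ i, l i) + d := by
  intro d
  induction d with
  | zero => exact fun _ => ⟨l, fun i => ⟨le_refl _, hlu i⟩, by simp⟩
  | succ d ih =>
    intro h
    obtain ⟨x, hx, hsum⟩ := ih (by omega)
    have hlt : ∑ i, x i < ∑ i, u i := by omega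
    have hex : ∃ i, x i < u i := by
      by_contra hc
      push_neg at hc
      exact absurd (Finset.sum_le_sum fun i _ => hc i) (not_le.mpr hlt)
    obtain ⟨i, hi⟩ := hex
    refine ⟨fun j => if j = i then x j + 1 else x j, ?_, ?_⟩
    · intro j
      by_cases hj : j = i
      · subst hj; simp only [if_pos rfl]
        exact ⟨(hx j).1.trans (Nat.le_succ _), hi⟩
      · simp only [if_neg hj]; exact hx j
    · have h1 : ∑ j, (if j = i then x j + 1 else x j) = ∑ j, (x j + if j = i then 1 else 0) := by
        apply Finset.sum_congr rfl; intro j _; by_cases hj : j = i <;> simp [hj]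
      rw [h1, Finset.sum_add_distrib, Finset.sum_ite_eq' Finset.univ i (fun _ => 1)]
      simp; omega

end Aux

section Aux2
variable {n : ℕ} {r : Fin n → ℕ}

lemma sum_succ_at (f g : Fin n → ℕ) (j0 : Fin n) (h1 : f j0 + 1 = g j0)
    (h2 : ∀ j, j ≠ j0 → f j = g j) : (∑ j, f j) + 1 = ∑ j, g j := by
  have h3 : ∑ j, g j = ∑ j, (f j + if j = j0 then 1 else 0) := by
    apply Finset.sum_congr rfl
    intro j _
    by_cases hj : j = j0
    · subst hj; rw [if_pos rfl]; omega
    · rw [if_neg hj, h2 j hj]; omega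
  rw [h3, Finset.sum_add_distrib, Finset.sum_ite_eq' Finset.univ j0 (fun _ => 1),
    if_pos (Finset.mem_univ j0)]

lemma dist_bot_top (hr : ∀ i, 2 ≤ r i) (bot top : Idx n r)
    (hbot : ∀ i, (bot i : ℕ) = 0) (htop : ∀ i, (top i : ℕ) = r i - 1) :
    hammingDist bot top = n := by
  have hfil : (Finset.univ.filter fun i => bot i ≠ top i) = Finset.univ := by
    apply Finset.filter_true_of_mem
    intro i _ h
    have h2 := congrArg Fin.val h
    rw [hbot i, htop i] at h2
    have := hr i
    omega
  show (Finset.univ.filter fun i => bot i ≠ top i).card = n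
  rw [hfil]
  simp

lemma pair_exists (hn : 3 ≤ n) (hr : ∀ i, 2 ≤ r i) (k : ℕ) (hk1 : 1 ≤ k)
    (hk2 : k + 1 ≤ ∑ i, (r i - 1)) :
    ∃ a b : Idx n r, sig a = k ∧ sig b = k ∧ hammingDist a b = 2 ∧
      sig (sw (⟨0, by omega⟩ : Fin n) a b) + 1 = k ∧
      sig (sw (⟨0, by omega⟩ : Fin n) b a) = k + 1 := by
  set i0 : Fin n := ⟨0, by omega⟩ with hi0
  set i1 : Fin n := ⟨1, by omega⟩ with hi1
  have hne : i0 ≠ i1 := by simp [hi0, hi1, Fin.ext_iff]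
  set l : Fin n → ℕ := fun j => if j = i0 then 1 else 0 with hl
  set u : Fin n → ℕ := fun j => if j = i1 then r j - 2 else r j - 1 with hu
  have hlu : ∀ i, l i ≤ u i := by
    intro i
    have h1 := hr i
    simp only [hl, hu]
    split_ifs with e1 e2
    · exact absurd (e1.symm.trans e2) hne
    all_goals omega
  have hsl : ∑ i, l i = 1 := by
    rw [hl, Finset.sum_ite_eq' Finset.univ i0 (fun _ => 1), if_pos (Finset.mem_univ i0)]
  have hsu : (∑ i, u i) + 1 = ∑ i, (r i - 1) := by
    have h4 : (∑ i, u i) + ∑ j, (if j = i1 then 1 else 0) = ∑ i, (r i - 1) := by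
      rw [← Finset.sum_add_distrib]
      apply Finset.sum_congr rfl
      intro j _
      have := hr j
      simp only [hu]
      split_ifs <;> omega
    rwa [Finset.sum_ite_eq' Finset.univ i1 (fun _ => 1), if_pos (Finset.mem_univ i1)] at h4
  obtain ⟨x, hx, hxsum⟩ := fill l u hlu (k - 1) (by omega)
  have hxk : ∑ i, x i = k := by omega
  have hx0 : 1 ≤ x i0 := by have := (hx i0).1; simpa [hl] using this
  have hx1 : x i1 + 1 ≤ r i1 - 1 := by
    have h2 := (hx i1).2
    simp only [hu, if_pos rfl] at h2
    have := hr i1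
    omega
  have hxlt : ∀ i, x i < r i := by
    intro i
    have h2 := (hx i).2
    simp only [hu] at h2
    have := hr i
    split_ifs at h2 <;> omega
  set y : Fin n → ℕ := fun j => if j = i0 then x j - 1 else if j = i1 then x j + 1 else x j with hy
  have hyi0 : y i0 = x i0 - 1 := by simp only [hy, if_pos rfl]
  have hyi1 : y i1 = x i1 + 1 := by simp [hy, if_neg (Ne.symm hne)]
  have hyo : ∀ j, j ≠ i0 → j ≠ i1 → y j = x j := by
    intro j h1 h2; simp only [hy, if_neg h1, if_neg h2]
  have hyo' : ∀ j, j = i0 → y j = x j - 1 := by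
    intro j h1; simp only [hy, if_pos h1]
  have hylt : ∀ i, y i < r i := by
    intro i
    by_cases h1 : i = i0
    · subst h1; rw [hyi0]; have := hxlt i0; omega
    · by_cases h2 : i = i1
      · subst h2; rw [hyi1]; omega
      · rw [hyo i h1 h2]; exact hxlt i
  set a : Idx n r := fun i => ⟨x i, hxlt i⟩ with ha
  set b : Idx n r := fun i => ⟨y i, hylt i⟩ with hb
  have hsiga : sig a = k := hxk
  -- intermediate z
  set z : Fin n → ℕ := fun j => if j = i0 then x j - 1 else x j with hz
  have hzx : (∑ j, z j) + 1 = ∑ j, x j := by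
    apply sum_succ_at z x i0
    · simp only [hz, if_pos rfl]; omega
    · intro j hj; simp only [hz, if_neg hj]
  have hzy : (∑ j, z j) + 1 = ∑ j, y j := by
    apply sum_succ_at z y i1
    · rw [hyi1]; simp only [hz, if_neg (Ne.symm hne)]
    · intro j hj
      by_cases h1 : j = i0
      · rw [hyo' j h1]; simp only [hz, if_pos h1]
      · rw [hyo j h1 hj]; simp only [hz, if_neg h1]
  have hsigb : sig b = k := by
    show ∑ j, y j = k
    omega
  have hswab : sig (sw i0 a b) = ∑ j, z j := by
    apply Finset.sum_congr rfl
    intro j _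
    show ((if j = i0 then b j else a j : Fin (r j)) : ℕ) = z j
    by_cases hj : j = i0
    · rw [if_pos hj]
      show y j = z j
      rw [hyo' j hj]
      simp only [hz, if_pos hj]
    · rw [if_neg hj]
      show x j = z j
      simp only [hz, if_neg hj]
  have hswba : sig (sw i0 b a) = (∑ j, y j) + 1 := by
    have : sig (sw i0 b a) = (∑ j, y j) + 1 := by
      rw [show sig (sw i0 b a) = ∑ j, (fun j => if j = i0 then x j else y j) j from ?_]
      · symm
        apply sum_succ_at y (fun j => if j = i0 then x j else y j) i0
        · show y i0 + 1 = if i0 = i0 then x i0 else y i0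
          rw [if_pos rfl, hyi0]
          omega
        · intro j hj; simp only [if_neg hj]
      · apply Finset.sum_congr rfl
        intro j _
        show ((if j = i0 then a j else b j : Fin (r j)) : ℕ) = (if j = i0 then x j else y j)
        by_cases hj : j = i0
        · rw [if_pos hj, if_pos hj]
        · rw [if_neg hj, if_neg hj]
    exact this
  have hdist : hammingDist a b = 2 := by
    have hfil : (Finset.univ.filter fun i => a i ≠ b i) = {i0, i1} := by
      ext j
      simp only [Finset.mem_filter, Finset.mem_univ, true_and, Finset.mem_insert,
        Finset.mem_singleton]
      constructor
      · intro hj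
        by_contra hc
        push_neg at hc
        exact hj (Fin.ext (by rw [show (b j : ℕ) = y j from rfl, hyo j hc.1 hc.2]))
      · intro hj hEq
        have h2 : x j = y j := congrArg Fin.val hEq
        rcases hj with h | h
        · rw [hyo' j h] at h2
          have h3 : 1 ≤ x j := by rw [h]; exact hx0
          omega
        · rw [show y j = x j + 1 from by rw [h]; exact hyi1] at h2
          omega
    show (Finset.univ.filter fun i => a i ≠ b i).card = 2
    rw [hfil]
    exact Finset.card_pair hne
  exact ⟨a, b, hsiga, hsigb, hdist, by rw [hswab]; omega, by rw [hswba]; omega⟩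

end Aux2

/-- for `n ≥ 3`, the `(n,t)`-switchable sets are exactly
`∅`, `{(1,…,1)}`, `{(r 1,…,r n)}`, `{(1,…,1),(r 1,…,r n)}` and `N`. -/
theorem switchable_classification_s_eq_n (n t : ℕ) (r : Fin n → ℕ)
    (hn : 3 ≤ n) (ht1 : 1 ≤ t) (htn : t ≤ n) (hr : ∀ i, 2 ≤ r i)
    (bot top : Idx n r) (hbot : ∀ i, (bot i : ℕ) = 0) (htop : ∀ i, (top i : ℕ) = r i - 1)
    (S : Set (Idx n r)) :
    Switchable n n t r S ↔
      S = ∅ ∨ S = {bot} ∨ S = {top} ∨ S = {bot, top} ∨ S = Set.univ := by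
  have hM3 : 3 ≤ ∑ i, (r i - 1) := by
    calc 3 ≤ n := hn
    _ = ∑ _i : Fin n, 1 := by simp
    _ ≤ ∑ i, (r i - 1) := Finset.sum_le_sum fun i _ => by have := hr i; omega
  have hsbot : sig bot = 0 := (sig_eq_zero_iff bot bot hbot).mpr rfl
  have hstop : sig top = ∑ i, (r i - 1) := (sig_eq_max_iff hr top top htop).mpr rfl
  have hi0t : ((⟨0, by omega⟩ : Fin n) : ℕ) < t := ht1
  constructor
  · intro hS
    have hcl : ∀ a ∈ S, ∀ b : Idx n r, sig b = sig a → b ∈ S := by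
      intro a ha b hb
      exact hS.2 a b ha ((sEquiv_n_iff a b).mpr hb.symm)
    by_cases hmid : ∃ a ∈ S, 1 ≤ sig a ∧ sig a + 1 ≤ ∑ i, (r i - 1)
    · right; right; right; right
      obtain ⟨a0, ha0, h1, h2⟩ := hmid
      have hstep : ∀ k, 1 ≤ k → k + 1 ≤ ∑ i, (r i - 1) → (∃ a ∈ S, sig a = k) →
          (∃ a ∈ S, sig a + 1 = k) ∧ (∃ a ∈ S, sig a = k + 1) := by
        rintro k hk1 hk2 ⟨w, hw, hwk⟩
        obtain ⟨a, b, hak, hbk, hd, hswd, hswu⟩ := pair_exists hn hr k hk1 hk2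
        have haS : a ∈ S := hcl w hw a (by omega)
        have hbS : b ∈ S := hcl w hw b (by omega)
        have hm1 := hS.1 a b haS hbS hd ⟨0, by omega⟩ hi0t
        have hm2 := hS.1 b a hbS haS (by rwa [hammingDist_comm]) ⟨0, by omega⟩ hi0t
        exact ⟨⟨_, hm1, hswd⟩, ⟨_, hm2, hswu⟩⟩
      have up : ∀ d, sig a0 + d ≤ ∑ i, (r i - 1) → ∃ a ∈ S, sig a = sig a0 + d := by
        intro d
        induction d with
        | zero => exact fun _ => ⟨a0, ha0, rfl⟩
        | succ d ih =>
          intro h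
          have hd := ih (by omega)
          have h3 := (hstep (sig a0 + d) (by omega) (by omega) hd).2
          obtain ⟨a, ha, he⟩ := h3
          exact ⟨a, ha, by omega⟩
      have down : ∀ d, d ≤ sig a0 → ∃ a ∈ S, sig a = sig a0 - d := by
        intro d
        induction d with
        | zero => exact fun _ => ⟨a0, ha0, by omega⟩
        | succ d ih =>
          intro h
          have hd := ih (by omega)
          have h3 := (hstep (sig a0 - d) (by omega) (by omega) hd).1
          obtain ⟨a, ha, he⟩ := h3
          exact ⟨a, ha, by omega⟩
      have hall : ∀ k, k ≤ ∑ i, (r i - 1) → ∃ a ∈ S, sig a = k := by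
        intro k hk
        rcases le_or_gt (sig a0) k with h | h
        · obtain ⟨a, ha, he⟩ := up (k - sig a0) (by omega); exact ⟨a, ha, by omega⟩
        · obtain ⟨a, ha, he⟩ := down (sig a0 - k) (by omega); exact ⟨a, ha, by omega⟩
      ext c
      simp only [Set.mem_univ, iff_true]
      obtain ⟨a, ha, he⟩ := hall (sig c) (sig_le hr c)
      exact hcl a ha c he.symm
    · push_neg at hmid
      have hsub : ∀ a ∈ S, a = bot ∨ a = top := by
        intro a ha
        have h1 := hmid a ha
        have hle := sig_le hr a
        rcases Nat.eq_zero_or_pos (sig a) with h0 | h0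
        · exact Or.inl ((sig_eq_zero_iff a bot hbot).mp h0)
        · refine Or.inr ((sig_eq_max_iff hr a top htop).mp ?_)
          have := h1 h0
          omega
      by_cases hb : bot ∈ S <;> by_cases htp : top ∈ S
      · right; right; right; left
        ext a
        simp only [Set.mem_insert_iff, Set.mem_singleton_iff]
        constructor
        · exact fun ha => hsub a ha
        · rintro (rfl | rfl) <;> assumption
      · right; left
        ext a
        simp only [Set.mem_singleton_iff]
        constructor
        · intro ha
          rcases hsub a ha with h | h
          · exact h
          · exact absurd (h ▸ ha) htp
        · rintro rfl; exact hb
      · right; right; left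
        ext a
        simp only [Set.mem_singleton_iff]
        constructor
        · intro ha
          rcases hsub a ha with h | h
          · exact absurd (h ▸ ha) hb
          · exact h
        · rintro rfl; exact htp
      · left
        ext a
        simp only [Set.mem_empty_iff_false, iff_false]
        intro ha
        rcases hsub a ha with h | h
        · exact hb (h ▸ ha)
        · exact htp (h ▸ ha)
  · have hdbt : hammingDist bot top = n := dist_bot_top hr bot top hbot htop
    rintro (rfl | rfl | rfl | rfl | rfl)
    · exact ⟨fun a b ha => ha.elim, fun a b ha => ha.elim⟩
    · constructor
      · intro a b ha hb hd
        rw [Set.mem_singleton_iff] at ha hb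
        rw [ha, hb, hammingDist_self] at hd
        exact absurd hd (by omega)
      · intro a b ha he
        rw [Set.mem_singleton_iff] at ha ⊢
        have hs := (sEquiv_n_iff a b).mp he
        rw [ha] at hs
        exact (sig_eq_zero_iff b bot hbot).mp (by omega)
    · constructor
      · intro a b ha hb hd
        rw [Set.mem_singleton_iff] at ha hb
        rw [ha, hb, hammingDist_self] at hd
        exact absurd hd (by omega)
      · intro a b ha he
        rw [Set.mem_singleton_iff] at ha ⊢
        have hs := (sEquiv_n_iff a b).mp he
        rw [ha] at hs
        exact (sig_eq_max_iff hr b top htop).mp (by omega)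
    · constructor
      · intro a b ha hb hd i hi
        exfalso
        simp only [Set.mem_insert_iff, Set.mem_singleton_iff] at ha hb
        rcases ha with ha | ha <;> rcases hb with hb | hb <;> rw [ha, hb] at hd
        · rw [hammingDist_self] at hd; omega
        · rw [hdbt] at hd; omega
        · rw [hammingDist_comm, hdbt] at hd; omega
        · rw [hammingDist_self] at hd; omega
      · intro a b ha he
        have hs := (sEquiv_n_iff a b).mp he
        simp only [Set.mem_insert_iff, Set.mem_singleton_iff] at ha ⊢
        rcases ha with ha | ha <;> rw [ha] at hs
        · exact Or.inl ((sig_eq_zero_iff b bot hbot).mp (by omega))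
        · exact Or.inr ((sig_eq_max_iff hr b top htop).mp (by omega))
    · exact ⟨fun _ _ _ _ _ _ _ => Set.mem_univ _, fun _ b _ _ => Set.mem_univ _⟩
end

section
/- For n ≥ 4, the (n−1,t)-switchable subsets of N are exactly: (1) the sets [r_1] × ⋯ × [r_{n-1}] × B for subsets B ⊆ [r_n]; and (2) the sets S such that every a ∈ S satisfies (a_1,…,a_{n-1}) = (1,…,1) or (a_1,…,a_{n-1}) = (r_1,…,r_{n-1}). -/
open Finset

-- helpers
def idxF (n : ℕ) : Finset (Fin n) := Finset.univ.filter (fun i : Fin n => (i : ℕ) < n - 1)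

lemma mem_idxF {n : ℕ} {i : Fin n} : i ∈ idxF n ↔ (i : ℕ) < n - 1 := by simp [idxF]

def sigF (n : ℕ) (r : Fin n → ℕ) (a : Idx n r) : ℕ := ∑ i ∈ idxF n, (a i : ℕ)

def capR (n : ℕ) (r : Fin n → ℕ) : ℕ := ∑ i ∈ idxF n, (r i - 1)

lemma eq_last_of_not {n : ℕ} {last : Fin n} (hlast : (last : ℕ) = n - 1)
    {i : Fin n} (h : ¬ (i : ℕ) < n - 1) : i = last := by
  apply Fin.ext; have := i.isLt; omega

lemma ne_last_of_mem {n : ℕ} {last : Fin n} (hlast : (last : ℕ) = n - 1)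
    {i : Fin n} (hi : i ∈ idxF n) : i ≠ last := by
  rw [mem_idxF] at hi; intro h; subst h; omega

lemma last_notMem_idxF {n : ℕ} {last : Fin n} (hlast : (last : ℕ) = n - 1) :
    last ∉ idxF n := by rw [mem_idxF]; omega

lemma idxF_eq_erase {n : ℕ} {last : Fin n} (hlast : (last : ℕ) = n - 1) :
    idxF n = Finset.univ.erase last := by
  ext i
  simp only [mem_idxF, Finset.mem_erase, Finset.mem_univ, and_true]
  constructor
  · intro h he; subst he; omega
  · intro h
    by_contra hc
    exact h (eq_last_of_not hlast hc)

lemma card_idxF {n : ℕ} {last : Fin n} (hlast : (last : ℕ) = n - 1) :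
    (idxF n).card = n - 1 := by
  rw [idxF_eq_erase hlast, Finset.card_erase_of_mem (Finset.mem_univ _)]
  simp

lemma sigF_le {n : ℕ} {r : Fin n → ℕ} (a : Idx n r) : sigF n r a ≤ capR n r :=
  Finset.sum_le_sum (fun i _ => by have := (a i).isLt; omega)

lemma capR_ge {n : ℕ} {r : Fin n → ℕ} (hr : ∀ i, 2 ≤ r i) {last : Fin n}
    (hlast : (last : ℕ) = n - 1) : n - 1 ≤ capR n r := by
  calc n - 1 = ∑ _i ∈ idxF n, 1 := by rw [Finset.sum_const, smul_eq_mul, mul_one, card_idxF hlast]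
  _ ≤ capR n r := Finset.sum_le_sum (fun i _ => by have := hr i; omega)

lemma mem_of_eq {n t : ℕ} {r : Fin n → ℕ} {S : Set (Idx n r)}
    (hS : Switchable n (n - 1) t r S) {last : Fin n} (hlast : (last : ℕ) = n - 1)
    {a b : Idx n r} (ha : a ∈ S) (h1 : sigF n r b = sigF n r a) (h2 : b last = a last) :
    b ∈ S := by
  refine hS.2 a b ha ⟨h1.symm, ?_⟩
  intro i hi
  have hi' : i = last := eq_last_of_not hlast (by omega)
  subst hi'; exact h2.symm

def mkIdx (n : ℕ) (r : Fin n → ℕ) (last : Fin n) (g : Fin n → ℕ) (hg : ∀ i, g i < r i)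
    (v : Fin (r last)) : Idx n r :=
  fun i => if h : i = last then ⟨(v : ℕ), by rw [h]; exact v.isLt⟩ else ⟨g i, hg i⟩

lemma mkIdx_last {n : ℕ} {r : Fin n → ℕ} {last : Fin n} {g : Fin n → ℕ} {hg : ∀ i, g i < r i}
    {v : Fin (r last)} : mkIdx n r last g hg v last = v := by
  simp [mkIdx]

lemma mkIdx_ne {n : ℕ} {r : Fin n → ℕ} {last : Fin n} {g : Fin n → ℕ} {hg : ∀ i, g i < r i}
    {v : Fin (r last)} {i : Fin n} (h : i ≠ last) : (mkIdx n r last g hg v i : ℕ) = g i := by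
  simp [mkIdx, h]

lemma sigF_mkIdx {n : ℕ} {r : Fin n → ℕ} {last : Fin n} (hlast : (last : ℕ) = n - 1)
    {g : Fin n → ℕ} {hg : ∀ i, g i < r i} {v : Fin (r last)} :
    sigF n r (mkIdx n r last g hg v) = ∑ i ∈ idxF n, g i :=
  Finset.sum_congr rfl (fun i hi => mkIdx_ne (ne_last_of_mem hlast hi))

-- realization of a sum
lemma realize_sum {n : ℕ} (c : Fin n → ℕ) (F : Finset (Fin n)) :
    ∀ m, m ≤ ∑ i ∈ F, c i →
    ∃ g : Fin n → ℕ, (∀ i, g i ≤ c i) ∧ (∀ i ∉ F, g i = 0) ∧ ∑ i ∈ F, g i = m := by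
  classical
  induction F using Finset.induction_on with
  | empty =>
    intro m hm
    simp only [Finset.sum_empty, Nat.le_zero] at hm
    exact ⟨fun _ => 0, fun _ => Nat.zero_le _, fun _ _ => rfl, by simp [hm]⟩
  | @insert j F' hj ih =>
    intro m hm
    rw [Finset.sum_insert hj] at hm
    obtain ⟨g, hg1, hg2, hg3⟩ := ih (m - min m (c j)) (by omega)
    refine ⟨fun i => if i = j then min m (c j) else g i, ?_, ?_, ?_⟩
    · intro i
      by_cases h : i = j
      · subst h; simp
      · simp [h]; exact hg1 i
    · intro i hi
      have h1 : i ≠ j := fun h => hi (h ▸ Finset.mem_insert_self j F')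
      have h2 : i ∉ F' := fun h => hi (Finset.mem_insert_of_mem h)
      simp [h1, hg2 i h2]
    · rw [Finset.sum_insert hj, if_pos rfl]
      have : ∑ i ∈ F', (if i = j then min m (c j) else g i) = ∑ i ∈ F', g i :=
        Finset.sum_congr rfl (fun i hi => by
          have : i ≠ j := fun h => hj (h ▸ hi)
          simp [this])
      rw [this, hg3]
      omega

-- Hamming distance lemmas
lemma hammingDist_eq_card {n : ℕ} {r : Fin n → ℕ} (a b : Idx n r) :
    hammingDist a b = (Finset.univ.filter (fun i => a i ≠ b i)).card := rfl

lemma hamming_two {n : ℕ} {r : Fin n → ℕ} {a b : Idx n r} {z k : Fin n} (hzk : z ≠ k)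
    (hz : a z ≠ b z) (hk : a k ≠ b k) (hother : ∀ j, j ≠ z → j ≠ k → a j = b j) :
    hammingDist a b = 2 := by
  rw [hammingDist_eq_card]
  have : (Finset.univ.filter (fun i => a i ≠ b i)) = {z, k} := by
    ext i
    simp only [Finset.mem_filter, Finset.mem_univ, true_and, Finset.mem_insert,
      Finset.mem_singleton]
    constructor
    · intro h
      by_contra hc
      push_neg at hc
      exact h (hother i hc.1 hc.2)
    · rintro (rfl | rfl) <;> assumption
  rw [this, Finset.card_pair hzk]

lemma hamming_le_one {n : ℕ} {r : Fin n → ℕ} {a b : Idx n r} {last : Fin n}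
    (h : ∀ j, j ≠ last → a j = b j) : hammingDist a b ≤ 1 := by
  rw [hammingDist_eq_card]
  have hsub : (Finset.univ.filter (fun i => a i ≠ b i)) ⊆ {last} := by
    intro i hi
    simp only [Finset.mem_filter, Finset.mem_univ, true_and] at hi
    simp only [Finset.mem_singleton]
    by_contra hc
    exact hi (h i hc)
  calc (Finset.univ.filter (fun i => a i ≠ b i)).card ≤ ({last} : Finset (Fin n)).card :=
        Finset.card_le_card hsub
    _ = 1 := Finset.card_singleton _

lemma hamming_ge {n : ℕ} {r : Fin n → ℕ} {a b : Idx n r} {last : Fin n}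
    (hlast : (last : ℕ) = n - 1) (h : ∀ j, j ∈ idxF n → a j ≠ b j) :
    n - 1 ≤ hammingDist a b := by
  rw [hammingDist_eq_card, ← card_idxF hlast]
  apply Finset.card_le_card
  intro i hi
  simp only [Finset.mem_filter, Finset.mem_univ, true_and]
  exact h i hi

-- shape lemmas
lemma exists_up_shape {n : ℕ} {r : Fin n → ℕ} (hn : 4 ≤ n) (hr : ∀ i, 2 ≤ r i)
    {last : Fin n} (hlast : (last : ℕ) = n - 1) {z : Fin n} (hzF : (z : ℕ) < n - 1)
    (m : ℕ) (hm1 : 1 ≤ m) (hm2 : m + 1 ≤ capR n r) :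
    ∃ g : Fin n → ℕ, (∀ i, g i < r i) ∧ (∑ i ∈ idxF n, g i = m) ∧ g z + 1 < r z ∧
      ∃ k : Fin n, (k : ℕ) < n - 1 ∧ k ≠ z ∧ 1 ≤ g k := by
  classical
  have hzmem : z ∈ idxF n := mem_idxF.2 hzF
  set F' := (idxF n).erase z with hF'
  have hcap : (∑ i ∈ F', (r i - 1)) + (r z - 1) = capR n r :=
    Finset.sum_erase_add _ _ hzmem
  have hzF' : z ∉ F' := Finset.notMem_erase _ _
  have hne : F'.Nonempty := by
    rw [← Finset.card_pos, Finset.card_erase_of_mem hzmem, card_idxF hlast]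
    omega
  by_cases hc : m ≤ ∑ i ∈ F', (r i - 1)
  · obtain ⟨g, hg1, hg2, hg3⟩ := realize_sum (fun i => r i - 1) F' m hc
    have hg1' : ∀ i, g i ≤ r i - 1 := hg1
    have hg3' : ∑ i ∈ F', g i = m := hg3
    have hgz : g z = 0 := hg2 z hzF'
    refine ⟨g, fun i => by have := hr i; have := hg1' i; omega, ?_, ?_, ?_⟩
    · beta_reduce
      rw [← Finset.sum_erase_add _ _ hzmem, ← hF', hg3', hgz]
      omega
    · have := hr z; omega
    · obtain ⟨k, hk, hk0⟩ := Finset.exists_ne_zero_of_sum_ne_zero (by rw [hg3']; omega)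
      rw [hF', Finset.mem_erase] at hk
      exact ⟨k, mem_idxF.1 hk.2, hk.1, by omega⟩
  · push_neg at hc
    set e := m - ∑ i ∈ F', (r i - 1) with hedef
    have he1 : e + 1 ≤ r z - 1 := by omega
    refine ⟨fun i => if i ∈ F' then r i - 1 else if i = z then e else 0, ?_, ?_, ?_, ?_⟩
    · intro i
      beta_reduce
      by_cases h1 : i ∈ F'
      · simp only [if_pos h1]; have := hr i; omega
      · by_cases h2 : i = z
        · rw [if_neg h1, if_pos h2]
          have := hr z; subst h2; omega
        · rw [if_neg h1, if_neg h2]; have := hr i; omega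
    · beta_reduce
      rw [← Finset.sum_erase_add _ _ hzmem, ← hF']
      have h1 : ∑ i ∈ F', (if i ∈ F' then r i - 1 else if i = z then e else 0)
          = ∑ i ∈ F', (r i - 1) := Finset.sum_congr rfl (fun i hi => if_pos hi)
      rw [h1, if_neg hzF', if_pos rfl]
      omega
    · beta_reduce
      rw [if_neg hzF', if_pos rfl]; omega
    · obtain ⟨k, hk⟩ := hne
      have hk2 := hk
      rw [hF', Finset.mem_erase] at hk2
      refine ⟨k, mem_idxF.1 hk2.2, hk2.1, ?_⟩
      beta_reduce
      simp only [if_pos hk]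
      have := hr k; omega

lemma exists_down_shape {n : ℕ} {r : Fin n → ℕ} (hn : 4 ≤ n) (hr : ∀ i, 2 ≤ r i)
    {last : Fin n} (hlast : (last : ℕ) = n - 1) {z : Fin n} (hzF : (z : ℕ) < n - 1)
    (m : ℕ) (hm1 : 1 ≤ m) (hm2 : m + 1 ≤ capR n r) :
    ∃ g : Fin n → ℕ, (∀ i, g i < r i) ∧ (∑ i ∈ idxF n, g i = m) ∧ 1 ≤ g z ∧
      ∃ k : Fin n, (k : ℕ) < n - 1 ∧ k ≠ z ∧ g k + 1 < r k := by
  classical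
  have hzmem : z ∈ idxF n := mem_idxF.2 hzF
  set F' := (idxF n).erase z with hF'
  have hcap : (∑ i ∈ F', (r i - 1)) + (r z - 1) = capR n r :=
    Finset.sum_erase_add _ _ hzmem
  have hzF' : z ∉ F' := Finset.notMem_erase _ _
  have hne : F'.Nonempty := by
    rw [← Finset.card_pos, Finset.card_erase_of_mem hzmem, card_idxF hlast]
    omega
  by_cases hc : m ≤ r z - 1
  · refine ⟨fun i => if i = z then m else 0, ?_, ?_, ?_, ?_⟩
    · intro i
      beta_reduce
      by_cases h : i = z
      · rw [if_pos h]; subst h; have := hr i; omega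
      · rw [if_neg h]; have := hr i; omega
    · beta_reduce
      rw [← Finset.sum_erase_add _ _ hzmem, ← hF', if_pos rfl]
      have h1 : ∑ i ∈ F', (if i = z then m else 0) = 0 :=
        Finset.sum_eq_zero (fun i hi => if_neg (by rw [hF', Finset.mem_erase] at hi; exact hi.1))
      rw [h1]
      omega
    · beta_reduce
      rw [if_pos rfl]; omega
    · obtain ⟨k, hk⟩ := hne
      have hk2 := hk
      rw [hF', Finset.mem_erase] at hk2
      refine ⟨k, mem_idxF.1 hk2.2, hk2.1, ?_⟩
      beta_reduce
      simp only [if_neg hk2.1]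
      have := hr k; omega
  · push_neg at hc
    obtain ⟨g, hg1, hg2, hg3⟩ := realize_sum (fun i => r i - 1) F' (m - (r z - 1))
      (by show m - (r z - 1) ≤ ∑ i ∈ F', (r i - 1); omega)
    have hg1' : ∀ i, g i ≤ r i - 1 := hg1
    have hg3' : ∑ i ∈ F', g i = m - (r z - 1) := hg3
    refine ⟨fun i => if i = z then r z - 1 else g i, ?_, ?_, ?_, ?_⟩
    · intro i
      beta_reduce
      by_cases h : i = z
      · rw [if_pos h]; subst h; have := hr i; omega
      · rw [if_neg h]; have := hr i; have := hg1' i; omega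
    · beta_reduce
      rw [← Finset.sum_erase_add _ _ hzmem, ← hF', if_pos rfl]
      have h1 : ∑ i ∈ F', (if i = z then r z - 1 else g i) = ∑ i ∈ F', g i :=
        Finset.sum_congr rfl (fun i hi =>
          if_neg (by rw [hF', Finset.mem_erase] at hi; exact hi.1))
      rw [h1, hg3']
      omega
    · beta_reduce
      rw [if_pos rfl]; have := hr z; omega
    · by_contra hcon
      push_neg at hcon
      have hall : ∀ k ∈ F', g k = r k - 1 := by
        intro k hk
        have hk2 := hk
        rw [hF', Finset.mem_erase] at hk2
        have h1 := hcon k (mem_idxF.1 hk2.2) hk2.1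
        rw [if_neg hk2.1] at h1
        have := hg1' k
        have := hr k
        omega
      have h2 : ∑ i ∈ F', g i = ∑ i ∈ F', (r i - 1) := Finset.sum_congr rfl hall
      omega

def hasWit {n : ℕ} {r : Fin n → ℕ} (S : Set (Idx n r)) (last : Fin n) (m : ℕ)
    (v : Fin (r last)) : Prop :=
  ∃ a ∈ S, sigF n r a = m ∧ a last = v

lemma sw_last {n : ℕ} {r : Fin n → ℕ} {last z : Fin n} (hz : z ≠ last) (a b : Idx n r) :
    sw z a b last = a last := if_neg (fun h => hz h.symm)

lemma sigF_sw {n : ℕ} {r : Fin n → ℕ} {z : Fin n} (hz : z ∈ idxF n) (a b : Idx n r) :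
    sigF n r (sw z a b) + (a z : ℕ) = sigF n r a + (b z : ℕ) := by
  unfold sigF
  rw [← Finset.sum_erase_add _ (fun i => ((sw z a b) i : ℕ)) hz,
      ← Finset.sum_erase_add _ (fun i => (a i : ℕ)) hz]
  have h1 : ∑ i ∈ (idxF n).erase z, ((sw z a b) i : ℕ) = ∑ i ∈ (idxF n).erase z, (a i : ℕ) :=
    Finset.sum_congr rfl (fun i hi => by
      have : i ≠ z := (Finset.mem_erase.1 hi).1
      simp [sw, this])
  have h2 : ((sw z a b) z : ℕ) = (b z : ℕ) := by simp [sw]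
  omega

lemma sum_two_swap {n : ℕ} (F : Finset (Fin n)) {z k : Fin n} (hz : z ∈ F) (hk : k ∈ F)
    (hzk : k ≠ z) (g g₂ : Fin n → ℕ) (hgg : ∀ i, i ≠ z → i ≠ k → g₂ i = g i) :
    ∑ i ∈ F, g₂ i + (g z + g k) = ∑ i ∈ F, g i + (g₂ z + g₂ k) := by
  have hk' : k ∈ F.erase z := Finset.mem_erase.2 ⟨hzk, hk⟩
  rw [← Finset.sum_erase_add F g₂ hz, ← Finset.sum_erase_add _ g₂ hk',
      ← Finset.sum_erase_add F g hz, ← Finset.sum_erase_add _ g hk']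
  have h : ∑ i ∈ (F.erase z).erase k, g₂ i = ∑ i ∈ (F.erase z).erase k, g i :=
    Finset.sum_congr rfl (fun i hi => by
      have h1 := (Finset.mem_erase.1 hi).1
      have h2 := (Finset.mem_erase.1 (Finset.mem_erase.1 hi).2).1
      exact hgg i h2 h1)
  omega

lemma move {n t : ℕ} {r : Fin n → ℕ} {S : Set (Idx n r)} {last : Fin n}
    (hn : 4 ≤ n) (hr : ∀ i, 2 ≤ r i) (hlast : (last : ℕ) = n - 1)
    (hS : Switchable n (n - 1) t r S)
    {z k : Fin n} (hzt : (z : ℕ) < t) (hzF : (z : ℕ) < n - 1) (hkF : (k : ℕ) < n - 1)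
    (hzk : k ≠ z) {v : Fin (r last)} {m : ℕ}
    (g : Fin n → ℕ) (hg : ∀ i, g i < r i) (hsg : ∑ i ∈ idxF n, g i = m)
    (hwit : hasWit S last m v)
    (e e' : ℕ) (he : e < r z) (he' : e' < r k) (hne : e ≠ g z)
    (hbal : e + e' = g z + g k) :
    hasWit S last (m - g z + e) v := by
  classical
  obtain ⟨w, hwS, hwσ, hwlast⟩ := hwit
  have hzlast : z ≠ last := fun h => by subst h; omega
  have hklast : k ≠ last := fun h => by subst h; omega
  have hzmem : z ∈ idxF n := mem_idxF.2 hzF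
  have hkmem : k ∈ idxF n := mem_idxF.2 hkF
  set a₁ := mkIdx n r last g hg v with ha₁
  have ha₁σ : sigF n r a₁ = m := by rw [sigF_mkIdx hlast, hsg]
  have ha₁S : a₁ ∈ S :=
    mem_of_eq hS hlast hwS (by rw [ha₁σ, hwσ]) (mkIdx_last.trans hwlast.symm)
  set g₂ := Function.update (Function.update g z e) k e' with hg₂def
  have hg₂z : g₂ z = e := by
    rw [hg₂def, Function.update_of_ne (fun h => hzk h.symm), Function.update_self]
  have hg₂k : g₂ k = e' := by rw [hg₂def, Function.update_self]
  have hg₂other : ∀ i, i ≠ z → i ≠ k → g₂ i = g i := fun i h1 h2 => by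
    rw [hg₂def, Function.update_of_ne h2, Function.update_of_ne h1]
  have hg₂ : ∀ i, g₂ i < r i := by
    intro i
    by_cases h1 : i = k
    · subst h1; rw [hg₂k]; exact he'
    · by_cases h2 : i = z
      · subst h2; rw [hg₂z]; exact he
      · rw [hg₂other i h2 h1]; exact hg i
  have hsg2 : ∑ i ∈ idxF n, g₂ i = m := by
    have := sum_two_swap (idxF n) hzmem hkmem hzk g g₂ hg₂other
    rw [hsg, hg₂z, hg₂k] at this
    omega
  set b₁ := mkIdx n r last g₂ hg₂ v with hb₁
  have hb₁σ : sigF n r b₁ = m := by rw [sigF_mkIdx hlast, hsg2]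
  have hb₁S : b₁ ∈ S :=
    mem_of_eq hS hlast hwS (by rw [hb₁σ, hwσ]) (mkIdx_last.trans hwlast.symm)
  have he'ne : e' ≠ g k := by omega
  have hdist : hammingDist a₁ b₁ = 2 := by
    refine hamming_two (fun h => hzk h.symm) ?_ ?_ ?_
    · intro hc
      have := congrArg Fin.val hc
      rw [ha₁, hb₁, mkIdx_ne hzlast, mkIdx_ne hzlast, hg₂z] at this
      exact hne this.symm
    · intro hc
      have := congrArg Fin.val hc
      rw [ha₁, hb₁, mkIdx_ne hklast, mkIdx_ne hklast, hg₂k] at this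
      exact he'ne this.symm
    · intro j hjz hjk
      by_cases hj : j = last
      · subst hj; rw [ha₁, hb₁, mkIdx_last, mkIdx_last]
      · apply Fin.ext
        rw [ha₁, hb₁, mkIdx_ne hj, mkIdx_ne hj, hg₂other j hjz hjk]
  have hswS : sw z a₁ b₁ ∈ S := hS.1 a₁ b₁ ha₁S hb₁S hdist z hzt
  have hgz_le : g z ≤ m := by
    rw [← hsg]
    exact Finset.single_le_sum (fun i _ => Nat.zero_le _) hzmem
  have hσsw : sigF n r (sw z a₁ b₁) = m - g z + e := by
    have h := sigF_sw hzmem a₁ b₁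
    have h1 : (a₁ z : ℕ) = g z := by rw [ha₁, mkIdx_ne hzlast]
    have h2 : (b₁ z : ℕ) = e := by rw [hb₁, mkIdx_ne hzlast, hg₂z]
    rw [h1, h2, ha₁σ] at h
    omega
  exact ⟨sw z a₁ b₁, hswS, hσsw, by rw [sw_last hzlast, ha₁, mkIdx_last]⟩

lemma wit_up {n t : ℕ} {r : Fin n → ℕ} {S : Set (Idx n r)} {last : Fin n}
    (hn : 4 ≤ n) (hr : ∀ i, 2 ≤ r i) (hlast : (last : ℕ) = n - 1)
    (hS : Switchable n (n - 1) t r S)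
    {z : Fin n} (hzt : (z : ℕ) < t) (hzF : (z : ℕ) < n - 1) {v : Fin (r last)} {m : ℕ}
    (hm1 : 1 ≤ m) (hm2 : m + 1 ≤ capR n r) (hwit : hasWit S last m v) :
    hasWit S last (m + 1) v := by
  obtain ⟨g, hg, hsg, hz1, k, hkF, hkz, hk1⟩ := exists_up_shape hn hr hlast hzF m hm1 hm2
  have hgz_le : g z ≤ m := by
    rw [← hsg]; exact Finset.single_le_sum (fun i _ => Nat.zero_le _) (mem_idxF.2 hzF)
  have h := move hn hr hlast hS hzt hzF hkF hkz g hg hsg hwit (g z + 1) (g k - 1)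
    (by omega) (by have := hg k; omega) (by omega) (by omega)
  rwa [show m - g z + (g z + 1) = m + 1 by omega] at h

lemma wit_down {n t : ℕ} {r : Fin n → ℕ} {S : Set (Idx n r)} {last : Fin n}
    (hn : 4 ≤ n) (hr : ∀ i, 2 ≤ r i) (hlast : (last : ℕ) = n - 1)
    (hS : Switchable n (n - 1) t r S)
    {z : Fin n} (hzt : (z : ℕ) < t) (hzF : (z : ℕ) < n - 1) {v : Fin (r last)} {m : ℕ}
    (hm1 : 1 ≤ m) (hm2 : m + 1 ≤ capR n r) (hwit : hasWit S last m v) :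
    hasWit S last (m - 1) v := by
  obtain ⟨g, hg, hsg, hz1, k, hkF, hkz, hk1⟩ := exists_down_shape hn hr hlast hzF m hm1 hm2
  have hgz_le : g z ≤ m := by
    rw [← hsg]; exact Finset.single_le_sum (fun i _ => Nat.zero_le _) (mem_idxF.2 hzF)
  have h := move hn hr hlast hS hzt hzF hkF hkz g hg hsg hwit (g z - 1) (g k + 1)
    (by have := hg z; omega) (by omega) (by omega) (by omega)
  rwa [show m - g z + (g z - 1) = m - 1 by omega] at h

lemma level_full {n t : ℕ} {r : Fin n → ℕ} {S : Set (Idx n r)} {last : Fin n}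
    (hn : 4 ≤ n) (ht1 : 1 ≤ t) (hr : ∀ i, 2 ≤ r i) (hlast : (last : ℕ) = n - 1)
    (hS : Switchable n (n - 1) t r S) {v : Fin (r last)} {m₀ : ℕ}
    (hm1 : 1 ≤ m₀) (hm2 : m₀ + 1 ≤ capR n r) (hwit : hasWit S last m₀ v) :
    ∀ b : Idx n r, b last = v → b ∈ S := by
  have hn0 : 0 < n := by omega
  set z : Fin n := ⟨0, hn0⟩ with hzdef
  have hzt : (z : ℕ) < t := by show 0 < t; omega
  have hzF : (z : ℕ) < n - 1 := by show 0 < n - 1; omega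
  have key : ∀ m, m ≤ capR n r → hasWit S last m v := by
    intro m hm
    rcases le_or_gt m₀ m with h | h
    · have up : ∀ d, m₀ + d ≤ capR n r → hasWit S last (m₀ + d) v := by
        intro d
        induction d with
        | zero => intro _; exact hwit
        | succ d ih =>
          intro hd
          have h1 := wit_up hn hr hlast hS hzt hzF (m := m₀ + d) (by omega) (by omega)
            (ih (by omega))
          rwa [show m₀ + (d + 1) = (m₀ + d) + 1 by omega]
      have := up (m - m₀) (by omega)
      rwa [show m₀ + (m - m₀) = m by omega] at this
    · have down : ∀ d, hasWit S last (m₀ - d) v := by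
        intro d
        induction d with
        | zero => exact hwit
        | succ d ih =>
          by_cases h0 : m₀ - d = 0
          · rwa [show m₀ - (d + 1) = m₀ - d by omega]
          · have h1 := wit_down hn hr hlast hS hzt hzF (m := m₀ - d) (by omega) (by omega) ih
            rwa [show m₀ - (d + 1) = (m₀ - d) - 1 by omega]
      have := down (m₀ - m)
      rwa [show m₀ - (m₀ - m) = m by omega] at this
  intro b hb
  obtain ⟨a, haS, hσ, hl⟩ := key (sigF n r b) (sigF_le b)
  exact mem_of_eq hS hlast haS hσ.symm (hb.trans hl.symm)

lemma cross {n t : ℕ} {r : Fin n → ℕ} {S : Set (Idx n r)} {last : Fin n}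
    (hn : 4 ≤ n) (ht1 : 1 ≤ t) (hr : ∀ i, 2 ≤ r i) (hlast : (last : ℕ) = n - 1)
    (hS : Switchable n (n - 1) t r S) {v w : Fin (r last)} (hvw : w ≠ v)
    (hfull : ∀ b : Idx n r, b last = v → b ∈ S) {p : ℕ} (hwit : hasWit S last p w)
    (hp : p = 0 ∨ p = capR n r) :
    ∃ q, 1 ≤ q ∧ q + 1 ≤ capR n r ∧ hasWit S last q w := by
  classical
  obtain ⟨x0, hx0S, hx0σ, hx0last⟩ := hwit
  have hn0 : 0 < n := by omega
  set z : Fin n := ⟨0, hn0⟩ with hzdef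
  have hzt : (z : ℕ) < t := by show 0 < t; omega
  have hzF : (z : ℕ) < n - 1 := by show 0 < n - 1; omega
  have hzmem : z ∈ idxF n := mem_idxF.2 hzF
  have hzlast : z ≠ last := ne_last_of_mem hlast hzmem
  have hcap3 : 3 ≤ capR n r := le_trans (by omega) (capR_ge hr hlast)
  have hrz := hr z
  rcases hp with hp0 | hpR
  · -- p = 0
    set g : Fin n → ℕ := fun _ => 0 with hgdef
    have hg : ∀ i, g i < r i := fun i => by have := hr i; show 0 < r i; omega
    set x := mkIdx n r last g hg w with hx
    have hxσ : sigF n r x = 0 := by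
      rw [hx, sigF_mkIdx hlast]; exact Finset.sum_eq_zero (fun i _ => rfl)
    have hxS : x ∈ S := mem_of_eq hS hlast hx0S (by rw [hxσ, hx0σ, hp0])
      (by rw [hx, mkIdx_last, hx0last])
    set g' := Function.update g z 1 with hg'def
    have hg'z : g' z = 1 := by rw [hg'def, Function.update_self]
    have hg'other : ∀ i, i ≠ z → g' i = 0 := fun i h => by
      rw [hg'def, Function.update_of_ne h]
    have hg' : ∀ i, g' i < r i := fun i => by
      by_cases h : i = z
      · subst h; rw [hg'z]; omega
      · rw [hg'other i h]; have := hr i; omega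
    set y := mkIdx n r last g' hg' v with hy
    have hyS : y ∈ S := hfull y (by rw [hy, mkIdx_last])
    have hdist : hammingDist x y = 2 := by
      refine hamming_two hzlast ?_ ?_ ?_
      · intro hc
        have := congrArg Fin.val hc
        rw [hx, hy, mkIdx_ne hzlast, mkIdx_ne hzlast, hg'z] at this
        simp [hgdef] at this
      · rw [hx, hy, mkIdx_last, mkIdx_last]; exact hvw
      · intro j hjz hjlast
        apply Fin.ext
        rw [hx, hy, mkIdx_ne hjlast, mkIdx_ne hjlast, hg'other j hjz]
    have hswS : sw z x y ∈ S := hS.1 x y hxS hyS hdist z hzt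
    refine ⟨1, le_refl _, by omega, sw z x y, hswS, ?_, ?_⟩
    · have h := sigF_sw hzmem x y
      have h1 : (x z : ℕ) = 0 := by rw [hx, mkIdx_ne hzlast]
      have h2 : (y z : ℕ) = 1 := by rw [hy, mkIdx_ne hzlast, hg'z]
      rw [h1, h2, hxσ] at h
      omega
    · rw [sw_last hzlast, hx, mkIdx_last]
  · -- p = capR
    set g : Fin n → ℕ := fun i => r i - 1 with hgdef
    have hg : ∀ i, g i < r i := fun i => by have := hr i; show r i - 1 < r i; omega
    set x := mkIdx n r last g hg w with hx
    have hxσ : sigF n r x = capR n r := by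
      rw [hx, sigF_mkIdx hlast]; rfl
    have hxS : x ∈ S := mem_of_eq hS hlast hx0S (by rw [hxσ, hx0σ, hpR])
      (by rw [hx, mkIdx_last, hx0last])
    set g' := Function.update g z (r z - 2) with hg'def
    have hg'z : g' z = r z - 2 := by rw [hg'def, Function.update_self]
    have hg'other : ∀ i, i ≠ z → g' i = r i - 1 := fun i h => by
      rw [hg'def, Function.update_of_ne h]
    have hg' : ∀ i, g' i < r i := fun i => by
      by_cases h : i = z
      · subst h; rw [hg'z]; omega
      · rw [hg'other i h]; have := hr i; omega
    set y := mkIdx n r last g' hg' v with hy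
    have hyS : y ∈ S := hfull y (by rw [hy, mkIdx_last])
    have hdist : hammingDist x y = 2 := by
      refine hamming_two hzlast ?_ ?_ ?_
      · intro hc
        have h := congrArg Fin.val hc
        rw [hx, hy, mkIdx_ne hzlast, mkIdx_ne hzlast, hg'z] at h
        have : g z = r z - 1 := rfl
        omega
      · rw [hx, hy, mkIdx_last, mkIdx_last]; exact hvw
      · intro j hjz hjlast
        apply Fin.ext
        rw [hx, hy, mkIdx_ne hjlast, mkIdx_ne hjlast, hg'other j hjz]
    have hswS : sw z x y ∈ S := hS.1 x y hxS hyS hdist z hzt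
    have hrzcap : r z - 1 ≤ capR n r := by
      rw [show capR n r = ∑ i ∈ idxF n, (r i - 1) from rfl]
      exact Finset.single_le_sum (f := fun i => r i - 1) (fun i _ => Nat.zero_le _) hzmem
    refine ⟨capR n r - 1, by omega, by omega, sw z x y, hswS, ?_, ?_⟩
    · have h := sigF_sw hzmem x y
      have h1 : (x z : ℕ) = r z - 1 := by rw [hx, mkIdx_ne hzlast]
      have h2 : (y z : ℕ) = r z - 2 := by rw [hy, mkIdx_ne hzlast, hg'z]
      rw [h1, h2, hxσ] at h
      omega
    · rw [sw_last hzlast, hx, mkIdx_last]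


/-- for `n ≥ 4`, the `(n−1,t)`-switchable sets are exactly (1) the cylinders
over a subset `B` of the last factor, and (2) the sets all of whose elements have their
first `n−1` components all `1` or all maximal. -/
theorem switchable_classification_s_eq_n_sub_one (n t : ℕ) (r : Fin n → ℕ)
    (hn : 4 ≤ n) (ht1 : 1 ≤ t) (htn : t ≤ n) (hr : ∀ i, 2 ≤ r i)
    (last : Fin n) (hlast : (last : ℕ) = n - 1)
    (S : Set (Idx n r)) :
    Switchable n (n - 1) t r S ↔
      ((∃ B : Set (Fin (r last)), S = {a : Idx n r | a last ∈ B}) ∨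
        (∀ a ∈ S, (∀ i : Fin n, (i : ℕ) < n - 1 → (a i : ℕ) = 0) ∨
          (∀ i : Fin n, (i : ℕ) < n - 1 → (a i : ℕ) = r i - 1))) := by
  constructor
  · intro hS
    by_cases h2 : ∀ a ∈ S, (∀ i : Fin n, (i : ℕ) < n - 1 → (a i : ℕ) = 0) ∨
        (∀ i : Fin n, (i : ℕ) < n - 1 → (a i : ℕ) = r i - 1)
    · exact Or.inr h2
    · left
      push_neg at h2
      obtain ⟨a₀, ha₀S, h01, h02⟩ := h2
      obtain ⟨i₀, hi₀F, hi₀⟩ := h01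
      obtain ⟨j₀, hj₀F, hj₀⟩ := h02
      have h1le : 1 ≤ (a₀ i₀ : ℕ) := by omega
      have hm1 : 1 ≤ sigF n r a₀ :=
        le_trans h1le
          (Finset.single_le_sum (f := fun i => ((a₀ i : ℕ)))
            (fun i _ => Nat.zero_le _) (mem_idxF.2 hi₀F))
      have hm2 : sigF n r a₀ + 1 ≤ capR n r := by
        have hlt : sigF n r a₀ < capR n r :=
          Finset.sum_lt_sum (fun i _ => by have := (a₀ i).isLt; omega)
            ⟨j₀, mem_idxF.2 hj₀F, by have := (a₀ j₀).isLt; omega⟩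
        omega
      have hfull₀ : ∀ b : Idx n r, b last = a₀ last → b ∈ S :=
        level_full hn ht1 hr hlast hS hm1 hm2 ⟨a₀, ha₀S, rfl, rfl⟩
      refine ⟨{w | ∃ x ∈ S, x last = w}, ?_⟩
      ext b
      simp only [Set.mem_setOf_eq]
      constructor
      · intro hb; exact ⟨b, hb, rfl⟩
      · rintro ⟨x, hxS, hxlast⟩
        by_cases hw : x last = a₀ last
        · exact hfull₀ b (by rw [← hxlast, hw])
        · by_cases hint : 1 ≤ sigF n r x ∧ sigF n r x + 1 ≤ capR n r
          · exact level_full hn ht1 hr hlast hS hint.1 hint.2 ⟨x, hxS, rfl, hxlast⟩ b rfl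
          · have hple := sigF_le x
            have hp : sigF n r x = 0 ∨ sigF n r x = capR n r := by omega
            obtain ⟨q, hq1, hq2, hqwit⟩ :=
              cross hn ht1 hr hlast hS hw hfull₀ ⟨x, hxS, rfl, rfl⟩ hp
            rw [hxlast] at hqwit
            exact level_full hn ht1 hr hlast hS hq1 hq2 hqwit b rfl
  · rintro (⟨B, rfl⟩ | h2)
    · constructor
      · intro a b ha hb hd i hit
        simp only [Set.mem_setOf_eq] at *
        by_cases h : last = i
        · rw [show sw i a b last = b last from if_pos h]; exact hb
        · rw [show sw i a b last = a last from if_neg h]; exact ha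
      · intro a b ha hab
        simp only [Set.mem_setOf_eq] at *
        rw [← hab.2 last (by omega)]
        exact ha
    · constructor
      · intro a b ha hb hd i hit
        exfalso
        have hsame : ∀ (f : ∀ j : Fin n, (j : ℕ) < n - 1 → Prop),
            True := fun _ => trivial
        have hne_lt : ∀ j : Fin n, j ≠ last → (j : ℕ) < n - 1 := by
          intro j hj
          by_contra hc
          exact hj (eq_last_of_not hlast hc)
        rcases h2 a ha with hA | hA <;> rcases h2 b hb with hB | hB
        · have heq : ∀ j, j ≠ last → a j = b j := fun j hj =>
            Fin.ext (by rw [hA j (hne_lt j hj), hB j (hne_lt j hj)])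
          have := hamming_le_one heq
          omega
        · have hne : ∀ j, j ∈ idxF n → a j ≠ b j := by
            intro j hj hc
            have h1 := congrArg Fin.val hc
            rw [hA j (mem_idxF.1 hj), hB j (mem_idxF.1 hj)] at h1
            have := hr j
            omega
          have := hamming_ge hlast hne
          omega
        · have hne : ∀ j, j ∈ idxF n → a j ≠ b j := by
            intro j hj hc
            have h1 := congrArg Fin.val hc
            rw [hA j (mem_idxF.1 hj), hB j (mem_idxF.1 hj)] at h1
            have := hr j
            omega
          have := hamming_ge hlast hne
          omega
        · have heq : ∀ j, j ≠ last → a j = b j := fun j hj =>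
            Fin.ext (by rw [hA j (hne_lt j hj), hB j (hne_lt j hj)])
          have := hamming_le_one heq
          omega
      · intro a b ha hab
        have hblast : b last = a last := (hab.2 last (by omega)).symm
        have hσ : sigF n r a = sigF n r b := hab.1
        have hne_lt : ∀ j : Fin n, j ≠ last → (j : ℕ) < n - 1 := by
          intro j hj
          by_contra hc
          exact hj (eq_last_of_not hlast hc)
        have hba : b = a := by
          rcases h2 a ha with hA | hA
          · have hσa : sigF n r a = 0 :=
              Finset.sum_eq_zero (fun i hi => hA i (mem_idxF.1 hi))
            have hσb : sigF n r b = 0 := by omega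
            have hb0 : ∀ i ∈ idxF n, (b i : ℕ) = 0 := Finset.sum_eq_zero_iff.1 hσb
            funext j
            by_cases hj : j = last
            · subst hj; exact hblast
            · exact Fin.ext
                (by rw [hb0 j (mem_idxF.2 (hne_lt j hj)), hA j (hne_lt j hj)])
          · have hσa : sigF n r a = capR n r :=
              Finset.sum_congr rfl (fun i hi => hA i (mem_idxF.1 hi))
            have hσb : sigF n r b = capR n r := by omega
            have hbmax : ∀ i ∈ idxF n, (b i : ℕ) = r i - 1 := by
              by_contra hc
              push_neg at hc
              obtain ⟨j, hjF, hjne⟩ := hc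
              have hlt : sigF n r b < capR n r :=
                Finset.sum_lt_sum (fun i _ => by have := (b i).isLt; omega)
                  ⟨j, hjF, by have := (b j).isLt; omega⟩
              omega
            funext j
            by_cases hj : j = last
            · subst hj; exact hblast
            · exact Fin.ext
                (by rw [hbmax j (mem_idxF.2 (hne_lt j hj)), hA j (hne_lt j hj)])
        rw [hba]
        exact ha
end

section
/- For n = 3, the (2,t)-switchable subsets of N = [r_1] × [r_2] × [r_3] are exactly: (1) the sets [r_1] × [r_2] × B for B ⊆ [r_3]; and (2) the sets S such that for each l ∈ [r_3] there is at most one a ∈ S with a_3 = l, and each such a satisfies (a_1, a_2) = (1,1) or (a_1, a_2) = (r_1, r_2). -/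
open Finset

def mk3 {r : Fin 3 → ℕ} (x : Fin (r 0)) (y : Fin (r 1)) (z : Fin (r 2)) : Idx 3 r :=
  fun i => match i with
  | ⟨0, _⟩ => x
  | ⟨1, _⟩ => y
  | ⟨2, _⟩ => z

lemma idx_ext3 {r : Fin 3 → ℕ} {a b : Idx 3 r} (h0 : a 0 = b 0) (h1 : a 1 = b 1) (h2 : a 2 = b 2) : a = b := by
  funext i; fin_cases i
  · exact h0
  · exact h1
  · exact h2

lemma ham3 {r : Fin 3 → ℕ} (a b : Idx 3 r) :
    hammingDist a b = (if a 0 = b 0 then 0 else 1) + (if a 1 = b 1 then 0 else 1) + (if a 2 = b 2 then 0 else 1) := by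
  simp only [hammingDist, Finset.card_filter, Fin.sum_univ_three]
  by_cases h0 : a 0 = b 0 <;> by_cases h1 : a 1 = b 1 <;> by_cases h2 : a 2 = b 2 <;> simp [h0, h1, h2]

lemma sum2 (f : Fin 3 → ℕ) : (∑ i ∈ Finset.univ.filter (fun i : Fin 3 => (i:ℕ) < 2), f i) = f 0 + f 1 := by
  have h : (Finset.univ.filter (fun i : Fin 3 => (i:ℕ) < 2)) = {0, 1} := by decide
  rw [h, Finset.sum_pair (by decide)]

lemma sEquiv_iff3 {r : Fin 3 → ℕ} (a b : Idx 3 r) :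
    sEquiv 3 2 r a b ↔ ((a 0 : ℕ) + (a 1 : ℕ) = (b 0 : ℕ) + (b 1 : ℕ) ∧ a 2 = b 2) := by
  unfold sEquiv
  rw [sum2, sum2]
  constructor
  · rintro ⟨h, h'⟩
    exact ⟨h, h' 2 (by norm_num)⟩
  · rintro ⟨h, h'⟩
    refine ⟨h, fun i hi => ?_⟩
    have hlt := i.isLt
    have hv : (i : ℕ) = 2 := by omega
    have : i = 2 := Fin.ext (by simpa using hv)
    rw [this]; exact h'

lemma full_layer {r : Fin 3 → ℕ} (hr : ∀ i, 2 ≤ r i)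
    {S : Set (Idx 3 r)}
    (hsw : ∀ a b, a ∈ S → b ∈ S → hammingDist a b = 2 → sw (0 : Fin 3) a b ∈ S)
    (heq : ∀ a b, a ∈ S → sEquiv 3 2 r a b → b ∈ S)
    {l : Fin (r 2)} {a b : Idx 3 r} (ha : a ∈ S) (hb : b ∈ S)
    (hal : a 2 = l) (hbl : b 2 = l) (hab : a ≠ b) :
    ∀ p : Idx 3 r, p 2 = l → p ∈ S := by
  have hr0 := hr 0
  have hr1 := hr 1
  set M := (r 0 - 1) + (r 1 - 1) with hM
  set T : ℕ → Prop := fun s => ∃ q ∈ S, q 2 = l ∧ (q 0 : ℕ) + (q 1 : ℕ) = s with hT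
  have hdiag : ∀ s, T s → ∀ p : Idx 3 r, p 2 = l → (p 0 : ℕ) + (p 1 : ℕ) = s → p ∈ S := by
    rintro s ⟨q, hq, hql, hqs⟩ p hpl hps
    exact heq q p hq ((sEquiv_iff3 q p).mpr ⟨by omega, by rw [hql, hpl]⟩)
  have hTle : ∀ s, T s → s ≤ M := by
    rintro s ⟨q, _, _, hqs⟩
    have := (q 0).isLt
    have := (q 1).isLt
    omega
  -- the key step: an interior diagonal generates both neighbouring diagonals
  have step : ∀ s, 0 < s → s < M → T s → T (s - 1) ∧ T (s + 1) := by
    intro s hs1 hsM hTs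
    set x0 := s - (r 1 - 1) with hx0def
    have hx0 : x0 + 1 < r 0 := by omega
    have hy0lt : s - x0 < r 1 := by omega
    have hy0pos : 1 ≤ s - x0 := by omega
    set A : Idx 3 r := mk3 ⟨x0, by omega⟩ ⟨s - x0, hy0lt⟩ l with hA
    set B : Idx 3 r := mk3 ⟨x0 + 1, hx0⟩ ⟨s - x0 - 1, by omega⟩ l with hB
    have hAS : A ∈ S := hdiag s hTs A rfl (by show x0 + (s - x0) = s; omega)
    have hBS : B ∈ S := hdiag s hTs B rfl (by show (x0 + 1) + (s - x0 - 1) = s; omega)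
    have hA0B0 : A 0 ≠ B 0 := by
      intro h
      have hv : x0 = x0 + 1 := congrArg Fin.val h
      omega
    have hA1B1 : A 1 ≠ B 1 := by
      intro h
      have hv : s - x0 = s - x0 - 1 := congrArg Fin.val h
      omega
    have hdAB : hammingDist A B = 2 := by
      rw [ham3, if_neg hA0B0, if_neg hA1B1, if_pos (show A 2 = B 2 from rfl)]
    have hdBA : hammingDist B A = 2 := by
      rw [ham3, if_neg (Ne.symm hA0B0), if_neg (Ne.symm hA1B1), if_pos (show B 2 = A 2 from rfl)]
    constructor
    · refine ⟨sw 0 B A, hsw B A hBS hAS hdBA, rfl, ?_⟩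
      show (x0 : ℕ) + (s - x0 - 1) = s - 1
      omega
    · refine ⟨sw 0 A B, hsw A B hAS hBS hdAB, rfl, ?_⟩
      show (x0 + 1 : ℕ) + (s - x0) = s + 1
      omega
  -- find an interior diagonal
  have hinterior : ∃ s0, 0 < s0 ∧ s0 < M ∧ T s0 := by
    have htwo : ∃ s s', T s ∧ T s' ∧ s < s' := by
      rcases eq_or_ne ((a 0 : ℕ) + (a 1 : ℕ)) ((b 0 : ℕ) + (b 1 : ℕ)) with hss | hss
      · have h2 : a 2 = b 2 := hal.trans hbl.symm
        have h0 : a 0 ≠ b 0 := by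
          intro h
          have hv := congrArg Fin.val h
          exact hab (idx_ext3 h (Fin.ext (by omega)) h2)
        have h1 : a 1 ≠ b 1 := by
          intro h
          have hv := congrArg Fin.val h
          exact hab (idx_ext3 (Fin.ext (by omega)) h h2)
        have hd : hammingDist a b = 2 := by
          rw [ham3, if_neg h0, if_neg h1, if_pos h2]
        have hC : sw 0 a b ∈ S := hsw a b ha hb hd
        have hTC : T ((b 0 : ℕ) + (a 1 : ℕ)) := ⟨sw 0 a b, hC, hal, rfl⟩
        have hTa : T ((a 0 : ℕ) + (a 1 : ℕ)) := ⟨a, ha, hal, rfl⟩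
        have hne : (b 0 : ℕ) + (a 1 : ℕ) ≠ (a 0 : ℕ) + (a 1 : ℕ) := by
          intro h
          exact h0 (Fin.ext (by omega)).symm
        rcases lt_or_gt_of_ne hne with h | h
        · exact ⟨_, _, hTC, hTa, h⟩
        · exact ⟨_, _, hTa, hTC, h⟩
      · have hTa : T ((a 0 : ℕ) + (a 1 : ℕ)) := ⟨a, ha, hal, rfl⟩
        have hTb : T ((b 0 : ℕ) + (b 1 : ℕ)) := ⟨b, hb, hbl, rfl⟩
        rcases lt_or_gt_of_ne hss with h | h
        · exact ⟨_, _, hTa, hTb, h⟩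
        · exact ⟨_, _, hTb, hTa, h⟩
    obtain ⟨s, s', hTs, hTs', hlt⟩ := htwo
    have hs'M := hTle s' hTs'
    by_cases h1 : 0 < s
    · exact ⟨s, h1, by omega, hTs⟩
    · by_cases h2 : s' < M
      · exact ⟨s', by omega, h2, hTs'⟩
      · have hs'e : s' = M := by omega
        obtain ⟨q, hq, hql, hqs⟩ := hTs
        obtain ⟨q', hq', hql', hqs'⟩ := hTs'
        have hlt0 := (q' 0).isLt
        have hlt1 := (q' 1).isLt
        have e0 : (q 0 : ℕ) = 0 := by omega
        have e1 : (q 1 : ℕ) = 0 := by omega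
        have e0' : (q' 0 : ℕ) = r 0 - 1 := by omega
        have e1' : (q' 1 : ℕ) = r 1 - 1 := by omega
        have h0 : q 0 ≠ q' 0 := by
          intro h
          have := congrArg Fin.val h
          omega
        have h1' : q 1 ≠ q' 1 := by
          intro h
          have := congrArg Fin.val h
          omega
        have hd : hammingDist q q' = 2 := by
          rw [ham3, if_neg h0, if_neg h1', if_pos (hql.trans hql'.symm)]
        have hC : sw 0 q q' ∈ S := hsw q q' hq hq' hd
        refine ⟨r 0 - 1, by omega, by omega, sw 0 q q', hC, hql, ?_⟩
        show (q' 0 : ℕ) + (q 1 : ℕ) = r 0 - 1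
        omega
  obtain ⟨s0, hs00, hs0M, hTs0⟩ := hinterior
  have down : ∀ k, T (s0 - k) := by
    intro k
    induction k with
    | zero => simpa using hTs0
    | succ k ih =>
      by_cases h : s0 ≤ k
      · have e : s0 - (k + 1) = s0 - k := by omega
        rw [e]; exact ih
      · have := (step (s0 - k) (by omega) (by omega) ih).1
        have e : s0 - k - 1 = s0 - (k + 1) := by omega
        rwa [e] at this
  have up : ∀ k, s0 + k ≤ M → T (s0 + k) := by
    intro k
    induction k with
    | zero => intro _; simpa using hTs0
    | succ k ih =>
      intro hk
      have := (step (s0 + k) (by omega) (by omega) (ih (by omega))).2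
      rwa [show s0 + k + 1 = s0 + (k + 1) from rfl] at this
  intro p hpl
  have hp0 := (p 0).isLt
  have hp1 := (p 1).isLt
  have hTp : T ((p 0 : ℕ) + (p 1 : ℕ)) := by
    rcases le_or_gt ((p 0 : ℕ) + (p 1 : ℕ)) s0 with h | h
    · have := down (s0 - ((p 0 : ℕ) + (p 1 : ℕ)))
      rwa [show s0 - (s0 - ((p 0 : ℕ) + (p 1 : ℕ))) = (p 0 : ℕ) + (p 1 : ℕ) by omega] at this
    · have := up (((p 0 : ℕ) + (p 1 : ℕ)) - s0) (by omega)
      rwa [show s0 + (((p 0 : ℕ) + (p 1 : ℕ)) - s0) = (p 0 : ℕ) + (p 1 : ℕ) by omega] at this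
  exact hdiag _ hTp p hpl rfl

/-- for `n = 3`, the `(2,t)`-switchable subsets of
`N = [r 1] × [r 2] × [r 3]` are exactly (1) the cylinders `[r 1] × [r 2] × B`, and
(2) the sets having at most one element over each value of the third component, each such
element having its first two components `(1,1)` or `(r 1, r 2)`. -/
theorem switchable_classification_n_three (t : ℕ) (r : Fin 3 → ℕ)
    (ht1 : 1 ≤ t) (ht3 : t ≤ 3) (hr : ∀ i, 2 ≤ r i)
    (S : Set (Idx 3 r)) :
    Switchable 3 2 t r S ↔
      ((∃ B : Set (Fin (r 2)), S = {a : Idx 3 r | a 2 ∈ B}) ∨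
        ((∀ a ∈ S, ((a 0 : ℕ) = 0 ∧ (a 1 : ℕ) = 0) ∨
            ((a 0 : ℕ) = r 0 - 1 ∧ (a 1 : ℕ) = r 1 - 1)) ∧
          (∀ a ∈ S, ∀ b ∈ S, a 2 = b 2 → a = b))) := by
  have hr0 := hr 0
  have hr1 := hr 1
  constructor
  · rintro ⟨hsw', heq⟩
    have hsw : ∀ a b, a ∈ S → b ∈ S → hammingDist a b = 2 → sw (0 : Fin 3) a b ∈ S :=
      fun a b ha hb hd => hsw' a b ha hb hd 0 (by simpa using (show 0 < t by omega))
    by_cases hmulti : ∃ a ∈ S, ∃ b ∈ S, a 2 = b 2 ∧ a ≠ b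
    · left
      obtain ⟨a, ha, b, hb, hab2, hab⟩ := hmulti
      have hfull0 : ∀ p : Idx 3 r, p 2 = a 2 → p ∈ S :=
        full_layer hr hsw heq ha hb rfl hab2.symm hab
      have hfull : ∀ c ∈ S, ∀ p : Idx 3 r, p 2 = c 2 → p ∈ S := by
        intro c hc p hp
        by_cases hcl : c 2 = a 2
        · exact hfull0 p (hp.trans hcl)
        · set x : Fin (r 0) := if (c 0 : ℕ) = 0 then ⟨1, by omega⟩ else ⟨0, by omega⟩ with hxdef
          have hx : c 0 ≠ x := by
            by_cases h : (c 0 : ℕ) = 0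
            · rw [hxdef, if_pos h]
              intro he
              have : (c 0 : ℕ) = 1 := congrArg Fin.val he
              omega
            · rw [hxdef, if_neg h]
              intro he
              have : (c 0 : ℕ) = 0 := congrArg Fin.val he
              omega
          set d : Idx 3 r := mk3 x (c 1) (a 2) with hddef
          have hdS : d ∈ S := hfull0 d rfl
          have hdist : hammingDist c d = 2 := by
            rw [ham3, if_neg (show c 0 ≠ d 0 from hx), if_pos (show c 1 = d 1 from rfl),
              if_neg (show c 2 ≠ d 2 from hcl)]
          have hC : sw 0 c d ∈ S := hsw c d hc hdS hdist
          have hcC : c ≠ sw 0 c d := by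
            intro h
            exact hx (congrFun h 0)
          exact full_layer hr hsw heq hc hC rfl rfl hcC p hp
      refine ⟨{l | ∃ c ∈ S, c 2 = l}, ?_⟩
      ext p
      simp only [Set.mem_setOf_eq]
      constructor
      · intro hp; exact ⟨p, hp, rfl⟩
      · rintro ⟨c, hc, hcl⟩
        exact hfull c hc p hcl.symm
    · right
      push_neg at hmulti
      refine ⟨?_, hmulti⟩
      intro a ha
      by_contra hcorner
      push_neg at hcorner
      obtain ⟨hc1, hc2⟩ := hcorner
      have h0 := (a 0).isLt
      have h1 := (a 1).isLt
      set s := (a 0 : ℕ) + (a 1 : ℕ) with hsdef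
      have hs0 : 0 < s := by omega
      have hsM : s < (r 0 - 1) + (r 1 - 1) := by omega
      set x0 := s - (r 1 - 1) with hx0def
      have hx0 : x0 + 1 < r 0 := by omega
      have hy0lt : s - x0 < r 1 := by omega
      have hy0pos : 1 ≤ s - x0 := by omega
      set A : Idx 3 r := mk3 ⟨x0, by omega⟩ ⟨s - x0, hy0lt⟩ (a 2) with hA
      set B : Idx 3 r := mk3 ⟨x0 + 1, hx0⟩ ⟨s - x0 - 1, by omega⟩ (a 2) with hB
      have hAS : A ∈ S := heq a A ha ((sEquiv_iff3 a A).mpr ⟨by show s = x0 + (s - x0); omega, rfl⟩)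
      have hBS : B ∈ S := heq a B ha ((sEquiv_iff3 a B).mpr ⟨by show s = (x0 + 1) + (s - x0 - 1); omega, rfl⟩)
      have hAB : A ≠ B := by
        intro h
        have hv : x0 = x0 + 1 := congrArg Fin.val (congrFun h 0)
        omega
      exact hAB (hmulti A hAS B hBS rfl)
  · rintro (⟨B, rfl⟩ | ⟨hcorner, huniq⟩)
    · constructor
      · intro a b ha hb hd i hit
        show (if (2 : Fin 3) = i then b 2 else a 2) ∈ B
        split_ifs
        · exact hb
        · exact ha
      · intro a b ha hse
        have h2 := ((sEquiv_iff3 a b).mp hse).2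
        show b 2 ∈ B
        rw [← h2]
        exact ha
    · constructor
      · intro a b ha hb hd i hit
        exfalso
        have h2 : a 2 ≠ b 2 := by
          intro h
          have he := huniq a ha b hb h
          rw [he] at hd
          simp at hd
        rw [ham3] at hd
        rcases hcorner a ha with ⟨e0, e1⟩ | ⟨e0, e1⟩ <;> rcases hcorner b hb with ⟨f0, f1⟩ | ⟨f0, f1⟩
        · rw [if_pos (Fin.ext (by omega)), if_pos (Fin.ext (by omega)), if_neg h2] at hd
          omega
        · rw [if_neg (show a 0 ≠ b 0 from fun h => by have := congrArg Fin.val h; omega),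
            if_neg (show a 1 ≠ b 1 from fun h => by have := congrArg Fin.val h; omega),
            if_neg h2] at hd
          omega
        · rw [if_neg (show a 0 ≠ b 0 from fun h => by have := congrArg Fin.val h; omega),
            if_neg (show a 1 ≠ b 1 from fun h => by have := congrArg Fin.val h; omega),
            if_neg h2] at hd
          omega
        · rw [if_pos (Fin.ext (by omega)), if_pos (Fin.ext (by omega)), if_neg h2] at hd
          omega
      · intro a b ha hse
        obtain ⟨hs, h2⟩ := (sEquiv_iff3 a b).mp hse
        have hb0 := (b 0).isLt
        have hb1 := (b 1).isLt
        have ha0 := (a 0).isLt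
        have ha1 := (a 1).isLt
        rcases hcorner a ha with ⟨e0, e1⟩ | ⟨e0, e1⟩ <;>
          · have : b = a := idx_ext3 (Fin.ext (by omega)) (Fin.ext (by omega)) h2.symm
            rwa [this]
end

section
/- Let a, b ∈ N with ‖a‖_s − ‖b‖_s = 2 where ‖a‖_s = Σ_{i=1}^n a_i (case s = n). Then there exist a', b' ∈ N that are n-equivalent to a, b respectively, with a'_1 − b'_1 = 1, a'_2 − b'_2 = 1, and a'_i = b'_i for i ≥ 3. -/
open Finset

lemma exists_le_sum_eq {ι : Type*} [DecidableEq ι] (s : Finset ι) (c : ι → ℕ) (m : ℕ)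
    (hm : m ≤ ∑ i ∈ s, c i) : ∃ x : ι → ℕ, (∀ i, x i ≤ c i) ∧ ∑ i ∈ s, x i = m := by
  induction s using Finset.induction_on generalizing m with
  | empty =>
    refine ⟨fun _ => 0, fun _ => Nat.zero_le _, ?_⟩
    simp at hm ⊢; omega
  | @insert a s ha ih =>
    rw [Finset.sum_insert ha] at hm
    obtain ⟨x, hx, hsum⟩ := ih (m - min m (c a)) (by omega)
    refine ⟨Function.update x a (min m (c a)), ?_, ?_⟩
    · intro i
      rcases eq_or_ne i a with rfl | hi
      · rw [Function.update_self]; omega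
      · rw [Function.update_of_ne hi]; exact hx i
    · rw [Finset.sum_insert ha, Function.update_self]
      have he : ∑ i ∈ s, Function.update x a (min m (c a)) i = ∑ i ∈ s, x i :=
        Finset.sum_congr rfl fun i hi => Function.update_of_ne (by rintro rfl; exact ha hi) _ _
      rw [he, hsum]
      omega

/-- if `‖a‖ − ‖b‖ = 2` (sums of all components, case `s = n`), then there
exist `a', b'` that are `n`-equivalent to `a, b` respectively, with
`a' 1 − b' 1 = 1`, `a' 2 − b' 2 = 1` and `a' i = b' i` for `i ≥ 3`. -/
theorem exists_nEquiv_reps_differing_in_first_two (n : ℕ) (r : Fin n → ℕ)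
    (hn : 2 ≤ n) (hr : ∀ i, 2 ≤ r i) (a b : Idx n r)
    (h : (∑ i, (a i : ℕ)) = (∑ i, (b i : ℕ)) + 2) :
    ∃ a' b' : Idx n r, sEquiv n n r a a' ∧ sEquiv n n r b b' ∧
      (a' ⟨0, by omega⟩ : ℕ) = (b' ⟨0, by omega⟩ : ℕ) + 1 ∧
      (a' ⟨1, by omega⟩ : ℕ) = (b' ⟨1, by omega⟩ : ℕ) + 1 ∧
      ∀ i : Fin n, 2 ≤ (i : ℕ) → a' i = b' i := by
  classical
  set c : Fin n → ℕ := fun i => if (i : ℕ) < 2 then r i - 2 else r i - 1 with hc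
  have hcard : (∑ i : Fin n, (if (i : ℕ) < 2 then 1 else 0)) = 2 := by
    rw [← Finset.card_filter]
    have hset : Finset.univ.filter (fun i : Fin n => (i : ℕ) < 2) =
        {(⟨0, by omega⟩ : Fin n), ⟨1, by omega⟩} := by
      ext i
      simp [Fin.ext_iff]
      omega
    rw [hset]
    rw [Finset.card_insert_of_notMem (by simp [Fin.ext_iff])]
    simp
  have hm : (∑ i, (b i : ℕ)) ≤ ∑ i, c i := by
    have h1 : ∀ i : Fin n, (a i : ℕ) ≤ c i + (if (i : ℕ) < 2 then 1 else 0) := by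
      intro i
      have h2 := (a i).isLt
      have h3 := hr i
      simp only [hc]
      split <;> omega
    have h4 : (∑ i, (a i : ℕ)) ≤ ∑ i, (c i + (if (i : ℕ) < 2 then 1 else 0)) :=
      Finset.sum_le_sum fun i _ => h1 i
    rw [Finset.sum_add_distrib, hcard] at h4
    omega
  obtain ⟨x, hx, hsum⟩ := exists_le_sum_eq Finset.univ c _ hm
  have hlt : ∀ i : Fin n, x i + (if (i : ℕ) < 2 then 1 else 0) < r i := by
    intro i
    have h2 := hx i
    have h3 := hr i
    simp only [hc] at h2
    by_cases h4 : (i : ℕ) < 2 <;> simp only [h4, if_true, if_false] at h2 ⊢ <;> omega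
  refine ⟨fun i => ⟨x i + (if (i : ℕ) < 2 then 1 else 0), hlt i⟩,
    fun i => ⟨x i, lt_of_le_of_lt (Nat.le_add_right _ _) (hlt i)⟩, ?_, ?_, by simp, by simp, ?_⟩
  · constructor
    · rw [Finset.filter_true_of_mem (fun i _ => i.isLt)]
      show (∑ i, (a i : ℕ)) = ∑ i, (x i + (if (i : ℕ) < 2 then 1 else 0))
      rw [Finset.sum_add_distrib, hsum, hcard]
      omega
    · intro i hi
      exact absurd i.isLt (by omega)
  · constructor
    · rw [Finset.filter_true_of_mem (fun i _ => i.isLt)]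
      exact hsum.symm
    · intro i hi
      exact absurd i.isLt (by omega)
  · intro i hi
    ext
    simp only [Fin.val_mk]
    rw [if_neg (by omega)]
    ring
end

section
/- For any a, b ∈ N with Hamming distance d(a,b) ≥ 2 and any i ∈ [n] with a_i ≠ b_i, there exists a path c_0 = a, c_1, …, c_l in N with l = d(a,b) − 2 such that d(c_{j-1}, c_j) = 1 for each j, c_{j-1} and c_j never differ in component i, d(c_l, b) = 2, and no two distinct c_j, c_h are s-equivalent (so the corresponding variables are pairwise distinct). -/
open Finset

/-- for `a, b` with `d(a,b) ≥ 2`, `a j ≥ b j` in the first `s` components,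
and `i` with `a i ≠ b i`, there is a path `c 0 = a, …, c l` with `l = d(a,b) − 2`,
consecutive Hamming distance `1`, never differing in component `i`, `d(c l, b) = 2`, and
with no two distinct members `s`-equivalent. -/
theorem path_with_distinct_variables (n s : ℕ) (r : Fin n → ℕ)
    (hs1 : 1 ≤ s) (hsn : s ≤ n) (hr : ∀ i, 2 ≤ r i)
    (a b : Idx n r) (hab : ∀ j : Fin n, (j : ℕ) < s → (b j : ℕ) ≤ (a j : ℕ))
    (hd : 2 ≤ hammingDist a b) (i : Fin n) (hne : a i ≠ b i) :
    ∃ c : ℕ → Idx n r, c 0 = a ∧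
      (∀ j < hammingDist a b - 2,
        hammingDist (c j) (c (j + 1)) = 1 ∧ c j i = c (j + 1) i) ∧
      hammingDist (c (hammingDist a b - 2)) b = 2 ∧
      (∀ j ≤ hammingDist a b - 2, ∀ h ≤ hammingDist a b - 2, j ≠ h →
        ¬ sEquiv n s r (c j) (c h)) := by
  classical
  set d := hammingDist a b with hd_def
  have hDcard : (Finset.univ.filter fun t => a t ≠ b t).card = d := rfl
  set D' : Finset (Fin n) := (Finset.univ.filter fun t => a t ≠ b t).erase i with hD'
  have hiD : i ∈ Finset.univ.filter fun t => a t ≠ b t := by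
    simp [Finset.mem_filter, hne]
  have hcard : D'.card = d - 1 := by
    rw [hD', Finset.card_erase_of_mem hiD, hDcard]
  set e : Fin (d - 1) → Fin n := fun m => ((D'.orderIsoOfFin hcard) m : Fin n) with he
  have he_mem : ∀ m, e m ∈ D' := fun m => ((D'.orderIsoOfFin hcard) m).2
  have he_ne : ∀ m, a (e m) ≠ b (e m) := by
    intro m
    have := he_mem m
    rw [hD', Finset.mem_erase, Finset.mem_filter] at this
    exact this.2.2
  have he_ne_i : ∀ m, e m ≠ i := by
    intro m
    have := he_mem m
    rw [hD', Finset.mem_erase] at this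
    exact this.1
  have he_inj : Function.Injective e := fun m₁ m₂ h =>
    (D'.orderIsoOfFin hcard).injective (Subtype.ext h)
  have he_surj : ∀ t ∈ D', ∃ m, e m = t := by
    intro t ht
    obtain ⟨m, hm⟩ := (D'.orderIsoOfFin hcard).surjective ⟨t, ht⟩
    exact ⟨m, congrArg Subtype.val hm⟩
  set L : ℕ → Finset (Fin n) :=
    fun j => (Finset.univ.filter fun m : Fin (d - 1) => (m : ℕ) < j).image e with hL
  have hmemL : ∀ j t, t ∈ L j ↔ ∃ m : Fin (d - 1), (m : ℕ) < j ∧ e m = t := by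
    intro j t
    simp [hL, Finset.mem_image, Finset.mem_filter]
  have hLmono : ∀ {j h : ℕ}, j ≤ h → ∀ {t}, t ∈ L j → t ∈ L h := by
    intro j h hjh t ht
    rw [hmemL] at ht ⊢
    obtain ⟨m, hm, hmt⟩ := ht
    exact ⟨m, lt_of_lt_of_le hm hjh, hmt⟩
  have hiL : ∀ j, i ∉ L j := by
    intro j hj
    rw [hmemL] at hj
    obtain ⟨m, _, hm⟩ := hj
    exact he_ne_i m hm
  set c : ℕ → Idx n r := fun j => swL (L j) a b with hc
  have hval : ∀ j t, c j t = if t ∈ L j then b t else a t := fun _ _ => rfl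
  refine ⟨c, ?_, ?_, ?_, ?_⟩
  · -- c 0 = a
    funext t
    rw [hval, if_neg]
    rw [hmemL]
    rintro ⟨m, hm, -⟩
    omega
  · -- steps
    intro j hj
    have hj1 : j < d - 1 := by omega
    set mj : Fin (d - 1) := ⟨j, hj1⟩ with hmj
    have hstep : ∀ t, c j t ≠ c (j + 1) t ↔ t = e mj := by
      intro t
      rw [hval, hval]
      by_cases h1 : t ∈ L j
      · rw [if_pos h1, if_pos (hLmono (Nat.le_succ j) h1)]
        simp only [ne_eq, not_true_eq_false, false_iff]
        intro ht
        rw [hmemL] at h1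
        obtain ⟨m, hm, hmt⟩ := h1
        have : m = mj := he_inj (hmt.trans ht)
        rw [this] at hm
        simp [hmj] at hm
      · rw [if_neg h1]
        by_cases h2 : t ∈ L (j + 1)
        · rw [if_pos h2]
          rw [hmemL] at h1 h2
          obtain ⟨m, hm, hmt⟩ := h2
          have hmm : (m : ℕ) = j := by
            rcases Nat.lt_succ_iff_lt_or_eq.mp hm with h | h
            · exact absurd ⟨m, h, hmt⟩ h1
            · exact h
          have htm : t = e mj := by
            rw [← hmt]
            exact congrArg e (Fin.ext (by simp [hmj, hmm]))
          subst htm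
          simp [he_ne mj]
        · rw [if_neg h2]
          simp only [ne_eq, not_true_eq_false, false_iff]
          rintro rfl
          exact h2 ((hmemL _ _).mpr ⟨mj, by simp [hmj], rfl⟩)
    constructor
    · show (Finset.univ.filter fun t => c j t ≠ c (j + 1) t).card = 1
      have : (Finset.univ.filter fun t => c j t ≠ c (j + 1) t) = {e mj} := by
        ext t
        simp [Finset.mem_filter, hstep t]
      rw [this, Finset.card_singleton]
    · rw [hval, hval, if_neg (hiL j), if_neg (hiL (j + 1))]
  · -- distance 2 at the end
    have hlast : d - 2 < d - 1 := by omega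
    set ml : Fin (d - 1) := ⟨d - 2, hlast⟩ with hml
    have hml_not : e ml ∉ L (d - 2) := by
      rw [hmemL]
      rintro ⟨m, hm, hmt⟩
      have : m = ml := he_inj hmt
      rw [this] at hm
      simp [hml] at hm
    have hset : (Finset.univ.filter fun t => c (d - 2) t ≠ b t) = {i, e ml} := by
      ext t
      simp only [Finset.mem_filter, Finset.mem_univ, true_and, Finset.mem_insert,
        Finset.mem_singleton]
      rw [hval]
      by_cases h1 : t ∈ L (d - 2)
      · rw [if_pos h1]
        simp only [ne_eq, not_true_eq_false, false_iff]
        push_neg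
        constructor
        · rintro rfl; exact hiL _ h1
        · rintro rfl; exact hml_not h1
      · rw [if_neg h1]
        constructor
        · intro hab'
          by_cases hti : t = i
          · exact Or.inl hti
          · have htD' : t ∈ D' := by
              rw [hD', Finset.mem_erase, Finset.mem_filter]
              exact ⟨hti, Finset.mem_univ t, hab'⟩
            obtain ⟨m, hm⟩ := he_surj t htD'
            have : (m : ℕ) = d - 2 := by
              by_contra hcon
              have : (m : ℕ) < d - 2 := by omega
              exact h1 ((hmemL _ _).mpr ⟨m, this, hm⟩)
            right
            rw [← hm]
            congr 1
            exact Fin.ext this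
        · rintro (rfl | rfl)
          · exact hne
          · exact he_ne ml
    show (Finset.univ.filter fun t => c (d - 2) t ≠ b t).card = 2
    rw [hset]
    rw [Finset.card_insert_of_notMem (by simp [Ne.symm (he_ne_i ml)]),
      Finset.card_singleton]
  · -- distinctness
    have key : ∀ j h : ℕ, j < h → h ≤ d - 2 → ¬ sEquiv n s r (c j) (c h) := by
      intro j h hjh hh hEq
      obtain ⟨hsum, hrest⟩ := hEq
      have hj1 : j < d - 1 := by omega
      set mj : Fin (d - 1) := ⟨j, hj1⟩ with hmj
      have ht0j : e mj ∉ L j := by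
        rw [hmemL]
        rintro ⟨m, hm, hmt⟩
        have : m = mj := he_inj hmt
        rw [this] at hm
        simp [hmj] at hm
      have ht0h : e mj ∈ L h := (hmemL _ _).mpr ⟨mj, by simp [hmj]; omega, rfl⟩
      have hcj : c j (e mj) = a (e mj) := by rw [hval, if_neg ht0j]
      have hch : c h (e mj) = b (e mj) := by rw [hval, if_pos ht0h]
      by_cases hts : (e mj : ℕ) < s
      · -- sum argument
        have hlt : (∑ t ∈ Finset.univ.filter (fun t : Fin n => (t : ℕ) < s), (c h t : ℕ)) <
            (∑ t ∈ Finset.univ.filter (fun t : Fin n => (t : ℕ) < s), (c j t : ℕ)) := by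
          apply Finset.sum_lt_sum
          · intro t ht
            rw [Finset.mem_filter] at ht
            rw [hval, hval]
            by_cases h1 : t ∈ L j
            · rw [if_pos h1, if_pos (hLmono (le_of_lt hjh) h1)]
            · rw [if_neg h1]
              by_cases h2 : t ∈ L h
              · rw [if_pos h2]; exact hab t ht.2
              · rw [if_neg h2]
          · refine ⟨e mj, Finset.mem_filter.mpr ⟨Finset.mem_univ _, hts⟩, ?_⟩
            rw [hcj, hch]
            have := hab (e mj) hts
            have := he_ne mj
            omega
        omega
      · -- equal-tail argument
        have := hrest (e mj) (by omega)
        rw [hcj, hch] at this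
        exact he_ne mj (by rw [this])
    intro j hj h hh hne'
    rcases Nat.lt_or_ge j h with hlt | hge
    · exact key j h hlt hh
    · have hlt : h < j := by omega
      intro hEq
      exact key h j hlt hj ⟨hEq.1.symm, fun t ht => (hEq.2 t ht).symm⟩
end
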